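/- arXiv:1806.09717 — 2 statements merged into one kernel-verified Lean document; each statement's English description precedes it below -/
import Mathlib

section
/- For every integer n ≥ 4, the number p_{4×n} of multiple self-avoiding polygons in the 4×n grid satisfies 8·(49/8)^(n−2) − 1 ≤ p_{4×n} ≤ (9520/27)·(155/22)^(n−4) − 1. -/
/-- Adjacency in the `m × n` grid graph: two lattice points at Euclidean distance 1. -/
def gridAdj (m n : ℕ) (a b : Fin m × Fin n) : Prop :=
  (a.1 = b.1 ∧ ((a.2 : ℕ) + 1 = (b.2 : ℕ) ∨ (b.2 : ℕ) + 1 = (a.2 : ℕ))) ∨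
  (a.2 = b.2 ∧ ((a.1 : ℕ) + 1 = (b.1 : ℕ) ∨ (b.1 : ℕ) + 1 = (a.1 : ℕ)))

instance (m n : ℕ) (a b : Fin m × Fin n) : Decidable (gridAdj m n a b) := by
  unfold gridAdj; infer_instance

/-- The `m × n` grid graph on vertex set `{1,…,m} × {1,…,n}`. -/
def gridGraph (m n : ℕ) : SimpleGraph (Fin m × Fin n) where
  Adj := gridAdj m n
  symm := ⟨by intro a b h; unfold gridAdj at *; tauto⟩
  loopless := ⟨by
    intro a h
    rcases h with ⟨_, h⟩ | ⟨_, h⟩ <;> omega⟩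

instance (m n : ℕ) : DecidableRel (gridGraph m n).Adj :=
  fun a b => inferInstanceAs (Decidable (gridAdj m n a b))

/-- The set of multiple self-avoiding polygons in the `m × n` grid:
nonempty edge subsets of the grid graph in which every vertex has degree 0 or 2. -/
def msapFinset (m n : ℕ) : Finset (Finset (Sym2 (Fin m × Fin n))) :=
  ((gridGraph m n).edgeFinset.powerset).filter
    (fun S => S ≠ ∅ ∧ ∀ v : Fin m × Fin n,
      (S.filter (fun e => v ∈ e)).card = 0 ∨ (S.filter (fun e => v ∈ e)).card = 2)

/-- `p_{m×n}`, the number of multiple self-avoiding polygons in the `m × n` grid. -/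
def msapCount (m n : ℕ) : ℕ := (msapFinset m n).card


abbrev St := Fin 4 → Bool
abbrev VCol := Fin 3 → Bool
abbrev Col := VCol × St

def botSt : St := fun _ => false

/-- contribution of vertical edge `k` (joining rows `k` and `k+1`) as 0/1, guarded. -/
def vbn (V : VCol) (k : ℕ) : ℕ := if h : k < 3 then (V ⟨k, h⟩).toNat else 0

/-- degree at row `r` of a column with left pending `a`, verticals `V`, right pending `b`. -/
def degAt (a : St) (V : VCol) (b : St) (r : Fin 4) : ℕ :=
  (a r).toNat + (b r).toNat + vbn V (r : ℕ) +
    (if (r : ℕ) = 0 then 0 else vbn V ((r : ℕ) - 1))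

def colOK (a : St) (V : VCol) (b : St) : Prop :=
  ∀ r : Fin 4, degAt a V b r = 0 ∨ degAt a V b r = 2

instance (a : St) (V : VCol) (b : St) : Decidable (colOK a V b) := by
  unfold colOK; infer_instance

def Tm (a b : St) : ℕ := (Finset.univ.filter (fun V : VCol => colOK a V b)).card

lemma Tm_symm (a b : St) : Tm a b = Tm b a := by
  unfold Tm
  congr 1
  apply Finset.filter_congr
  intro V _
  have : ∀ x y : St, degAt x V y = degAt y V x := by
    intro x y; funext r; unfold degAt; ring
  simp only [colOK, this]

def Fn : ℕ → St → ℕ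
  | 0, a => if a = botSt then 1 else 0
  | n+1, a => ∑ b : St, Tm a b * Fn n b

lemma conv : ∀ j k : ℕ, Fn (j + k) botSt = ∑ b : St, Fn j b * Fn k b := by
  intro j
  induction j with
  | zero =>
    intro k
    simp only [Nat.zero_add, Fn]
    rw [Finset.sum_eq_single botSt]
    · simp
    · intro b _ hb; simp [hb]
    · intro h; simp at h
  | succ j ih =>
    intro k
    have h1 : j + 1 + k = j + (k + 1) := by omega
    rw [h1, ih (k+1)]
    have h2 : ∀ c : St, Fn (k+1) c = ∑ b : St, Tm c b * Fn k b := fun c => rfl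
    have h3 : ∀ b : St, Fn (j+1) b = ∑ c : St, Tm b c * Fn j c := fun b => rfl
    simp only [h2, h3, Finset.mul_sum, Finset.sum_mul]
    rw [Finset.sum_comm]
    refine Finset.sum_congr rfl fun b _ => Finset.sum_congr rfl fun c _ => ?_
    rw [Tm_symm c b]; ring

def tv4 : Bool → Bool → Bool → Bool → ℕ
  | false, false, false, false => 322
  | false, false, false, true => 0
  | false, false, true, false => 0
  | false, false, true, true => 250
  | false, true, false, false => 0
  | false, true, false, true => 250
  | false, true, true, false => 211
  | false, true, true, true => 0
  | true, false, false, false => 0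
  | true, false, false, true => 322
  | true, false, true, false => 250
  | true, false, true, true => 0
  | true, true, false, false => 250
  | true, true, false, true => 0
  | true, true, true, false => 0
  | true, true, true, true => 211

def t4 (b : St) : ℕ := tv4 (b 0) (b 1) (b 2) (b 3)

set_option maxHeartbeats 4000000 in
lemma fact1 : ∀ b : St, 49 * Fn 2 b ≤ 8 * Fn 3 b := by decide

set_option maxHeartbeats 12000000 in
lemma h4 : ∀ b : St, Fn 4 b = t4 b := by decide

set_option maxHeartbeats 4000000 in
lemma fact2 : ∀ b : St, 22 * Fn 5 b ≤ 155 * Fn 4 b := by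
  intro b
  have e5 : Fn 5 b = ∑ c : St, Tm b c * Fn 4 c := rfl
  rw [e5]
  simp only [h4]
  revert b
  decide

lemma fact3 : Fn 2 botSt = 8 := by decide
lemma fact4 : Fn 4 botSt = 322 := by rw [h4]; decide

lemma R1 (k : ℕ) : 49 * Fn (k + 2) botSt ≤ 8 * Fn (k + 3) botSt := by
  have h2 : Fn (k + 2) botSt = ∑ b : St, Fn 2 b * Fn k b := by
    rw [show k + 2 = 2 + k by omega]; exact conv 2 k
  have h3 : Fn (k + 3) botSt = ∑ b : St, Fn 3 b * Fn k b := by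
    rw [show k + 3 = 3 + k by omega]; exact conv 3 k
  rw [h2, h3, Finset.mul_sum, Finset.mul_sum]
  apply Finset.sum_le_sum
  intro b _
  rw [← mul_assoc, ← mul_assoc]
  exact Nat.mul_le_mul_right _ (fact1 b)

lemma R2 (k : ℕ) : 22 * Fn (k + 5) botSt ≤ 155 * Fn (k + 4) botSt := by
  have h4 : Fn (k + 4) botSt = ∑ b : St, Fn 4 b * Fn k b := by
    rw [show k + 4 = 4 + k by omega]; exact conv 4 k
  have h5 : Fn (k + 5) botSt = ∑ b : St, Fn 5 b * Fn k b := by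
    rw [show k + 5 = 5 + k by omega]; exact conv 5 k
  rw [h4, h5, Finset.mul_sum, Finset.mul_sum]
  apply Finset.sum_le_sum
  intro b _
  rw [← mul_assoc, ← mul_assoc]
  exact Nat.mul_le_mul_right _ (fact2 b)

lemma P1 : ∀ k : ℕ, 49 ^ k * 8 ≤ 8 ^ k * Fn (k + 2) botSt := by
  intro k
  induction k with
  | zero => simp [fact3]
  | succ k ih =>
    have h := R1 k
    have e : k + 1 + 2 = k + 3 := by omega
    rw [e, pow_succ, pow_succ]
    calc 49 ^ k * 49 * 8 = 49 * (49 ^ k * 8) := by ring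
    _ ≤ 49 * (8 ^ k * Fn (k + 2) botSt) := Nat.mul_le_mul_left _ ih
    _ = 8 ^ k * (49 * Fn (k + 2) botSt) := by ring
    _ ≤ 8 ^ k * (8 * Fn (k + 3) botSt) := Nat.mul_le_mul_left _ h
    _ = 8 ^ k * 8 * Fn (k + 3) botSt := by ring

lemma P2 : ∀ k : ℕ, 27 * (22 ^ k * Fn (k + 4) botSt) ≤ 9520 * 155 ^ k := by
  intro k
  induction k with
  | zero => simp [fact4]
  | succ k ih =>
    have h := R2 k
    have e : k + 1 + 4 = k + 5 := by omega
    rw [e, pow_succ, pow_succ]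
    calc 27 * (22 ^ k * 22 * Fn (k + 5) botSt)
        = 22 ^ k * (27 * (22 * Fn (k + 5) botSt)) := by ring
    _ ≤ 22 ^ k * (27 * (155 * Fn (k + 4) botSt)) :=
        Nat.mul_le_mul_left _ (Nat.mul_le_mul_left _ h)
    _ = 155 * (27 * (22 ^ k * Fn (k + 4) botSt)) := by ring
    _ ≤ 155 * (9520 * 155 ^ k) := Nat.mul_le_mul_left _ ih
    _ = 9520 * (155 ^ k * 155) := by ring

def goodFrom : (n : ℕ) → St → (Fin n → Col) → Prop
  | 0, a, _ => a = botSt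
  | n+1, a, y => colOK a (y 0).1 (y 0).2 ∧ goodFrom n (y 0).2 (Fin.tail y)

def decGoodFrom : (n : ℕ) → (a : St) → (y : Fin n → Col) → Decidable (goodFrom n a y)
  | 0, a, _ => inferInstanceAs (Decidable (a = botSt))
  | n+1, a, y =>
    haveI := decGoodFrom n (y 0).2 (Fin.tail y)
    inferInstanceAs (Decidable (_ ∧ _))

instance (n : ℕ) (a : St) (y : Fin n → Col) : Decidable (goodFrom n a y) :=
  decGoodFrom n a y

lemma goodFrom_cons (n : ℕ) (a : St) (x : Col) (y : Fin n → Col) :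
    goodFrom (n+1) a (Fin.cons x y) ↔ colOK a x.1 x.2 ∧ goodFrom n x.2 y := by
  show colOK a ((Fin.cons x y : Fin (n+1) → Col) 0).1 _ ∧ _ ↔ _
  rw [Fin.cons_zero, Fin.tail_cons]

lemma countGood : ∀ (n : ℕ) (a : St),
    (Finset.univ.filter (fun y : Fin n → Col => goodFrom n a y)).card = Fn n a := by
  intro n
  induction n with
  | zero =>
    intro a
    rcases eq_or_ne a botSt with h | h
    · subst h
      simp only [Fn, if_pos rfl]
      rw [Finset.filter_true_of_mem (fun y _ => show goodFrom 0 botSt y from rfl)]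
      simp
    · simp only [Fn, if_neg h]
      rw [Finset.filter_false_of_mem (fun y _ => show ¬ goodFrom 0 a y from h)]
      simp
  | succ n ih =>
    intro a
    have ecard : (Finset.univ.filter (fun y : Fin (n+1) → Col => goodFrom (n+1) a y)).card
        = Fintype.card {y : Fin (n+1) → Col // goodFrom (n+1) a y} :=
      (Fintype.card_subtype _).symm
    have equ : {y : Fin (n+1) → Col // goodFrom (n+1) a y}
        ≃ (Σ x : Col, {y : Fin n → Col // colOK a x.1 x.2 ∧ goodFrom n x.2 y}) :=
      { toFun := fun p => ⟨p.1 0, ⟨Fin.tail p.1, by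
          have h := p.2
          rw [show p.1 = Fin.cons (p.1 0) (Fin.tail p.1) from (Fin.cons_self_tail p.1).symm] at h
          exact (goodFrom_cons n a _ _).1 h⟩⟩
        invFun := fun q => ⟨Fin.cons q.1 q.2.1, (goodFrom_cons n a q.1 q.2.1).2 q.2.2⟩
        left_inv := fun p => by
          apply Subtype.ext
          exact Fin.cons_self_tail p.1
        right_inv := fun q => by
          rcases q with ⟨x, y, hy⟩
          refine Sigma.ext (by simp) (heq_of_eq (Subtype.ext (by simp))) }
    rw [ecard, Fintype.card_congr equ, Fintype.card_sigma]
    have hx : ∀ x : Col,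
        Fintype.card {y : Fin n → Col // colOK a x.1 x.2 ∧ goodFrom n x.2 y}
          = if colOK a x.1 x.2 then Fn n x.2 else 0 := by
      intro x
      by_cases hc : colOK a x.1 x.2
      · rw [if_pos hc]
        rw [Fintype.card_congr (Equiv.subtypeEquivRight (fun y => and_iff_right hc))]
        rw [Fintype.card_subtype]
        exact ih x.2
      · rw [if_neg hc]
        haveI : IsEmpty {y : Fin n → Col // colOK a x.1 x.2 ∧ goodFrom n x.2 y} :=
          ⟨fun p => hc p.2.1⟩
        exact Fintype.card_eq_zero
    simp only [hx]
    show _ = ∑ b : St, Tm a b * Fn n b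
    rw [Fintype.sum_prod_type_right]
    refine Finset.sum_congr rfl fun b _ => ?_
    have h1 : ∀ V : VCol, (if colOK a (V, b).1 (V, b).2 then Fn n (V, b).2 else 0)
        = (if colOK a V b then 1 else 0) * Fn n b := by
      intro V; by_cases hc : colOK a V b <;> simp [hc]
    simp only [h1]
    rw [← Finset.sum_mul, ← Finset.card_filter]
    rfl

section GridSide

variable {n : ℕ}

def vb (V : VCol) (k : ℕ) : Bool := if h : k < 3 then V ⟨k, h⟩ else false

lemma vbn_eq_toNat (V : VCol) (k : ℕ) : vbn V k = (vb V k).toNat := by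
  unfold vbn vb; split <;> rfl

def adjBit (y : Fin n → Col) (u v : Fin 4 × Fin n) : Bool :=
  ((decide ((u.1 : ℕ) = (v.1 : ℕ)) && decide ((u.2 : ℕ) + 1 = (v.2 : ℕ))) && (y u.2).2 u.1) ||
  ((decide ((u.1 : ℕ) = (v.1 : ℕ)) && decide ((v.2 : ℕ) + 1 = (u.2 : ℕ))) && (y v.2).2 u.1) ||
  ((decide ((u.2 : ℕ) = (v.2 : ℕ)) && decide ((u.1 : ℕ) + 1 = (v.1 : ℕ))) && vb (y u.2).1 (u.1 : ℕ)) ||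
  ((decide ((u.2 : ℕ) = (v.2 : ℕ)) && decide ((v.1 : ℕ) + 1 = (u.1 : ℕ))) && vb (y u.2).1 (v.1 : ℕ))

lemma adjBit_symm (y : Fin n → Col) (u v : Fin 4 × Fin n) :
    adjBit y u v = adjBit y v u := by
  rw [Bool.eq_iff_iff]
  unfold adjBit
  simp only [Bool.or_eq_true, Bool.and_eq_true, decide_eq_true_eq]
  constructor
  · rintro ((((⟨⟨e, c⟩, hb⟩ | ⟨⟨e, c⟩, hb⟩) | ⟨⟨e, c⟩, hb⟩) | ⟨⟨e, c⟩, hb⟩))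
    · exact Or.inl (Or.inl (Or.inr ⟨⟨e.symm, c⟩, by
        rw [show v.1 = u.1 from Fin.ext e.symm]; exact hb⟩))
    · exact Or.inl (Or.inl (Or.inl ⟨⟨e.symm, c⟩, by
        rw [show v.1 = u.1 from Fin.ext e.symm]; exact hb⟩))
    · exact Or.inr ⟨⟨e.symm, c⟩, by
        rw [show v.2 = u.2 from Fin.ext e.symm]; exact hb⟩
    · exact Or.inl (Or.inr ⟨⟨e.symm, c⟩, by
        rw [show v.2 = u.2 from Fin.ext e.symm]; exact hb⟩)
  · rintro ((((⟨⟨e, c⟩, hb⟩ | ⟨⟨e, c⟩, hb⟩) | ⟨⟨e, c⟩, hb⟩) | ⟨⟨e, c⟩, hb⟩))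
    · exact Or.inl (Or.inl (Or.inr ⟨⟨e.symm, c⟩, by
        rw [show u.1 = v.1 from Fin.ext e.symm]; exact hb⟩))
    · exact Or.inl (Or.inl (Or.inl ⟨⟨e.symm, c⟩, by
        rw [show u.1 = v.1 from Fin.ext e.symm]; exact hb⟩))
    · exact Or.inr ⟨⟨e.symm, c⟩, by
        rw [show u.2 = v.2 from Fin.ext e.symm]; exact hb⟩
    · exact Or.inl (Or.inr ⟨⟨e.symm, c⟩, by
        rw [show u.2 = v.2 from Fin.ext e.symm]; exact hb⟩)

def adjSym (y : Fin n → Col) : Sym2 (Fin 4 × Fin n) → Bool :=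
  Sym2.lift ⟨fun u v => adjBit y u v, fun u v => adjBit_symm y u v⟩

def decodeY (y : Fin n → Col) : Finset (Sym2 (Fin 4 × Fin n)) :=
  Finset.univ.filter (fun e => adjSym y e = true)

lemma mem_decodeY (y : Fin n → Col) (u v : Fin 4 × Fin n) :
    s(u, v) ∈ decodeY y ↔ adjBit y u v = true := by
  rw [decodeY, Finset.mem_filter]
  exact ⟨fun h => h.2, fun h => ⟨Finset.mem_univ _, h⟩⟩

lemma decodeY_subset (y : Fin n → Col) :
    decodeY y ⊆ (gridGraph 4 n).edgeFinset := by
  intro e he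
  induction e using Sym2.ind with
  | _ u v =>
    rw [SimpleGraph.mem_edgeFinset, SimpleGraph.mem_edgeSet]
    rw [mem_decodeY] at he
    show gridAdj 4 n u v
    unfold adjBit at he
    simp only [Bool.or_eq_true, Bool.and_eq_true, decide_eq_true_eq] at he
    unfold gridAdj
    rcases he with ((⟨⟨e1, c⟩, _⟩ | ⟨⟨e1, c⟩, _⟩) | ⟨⟨e1, c⟩, _⟩) | ⟨⟨e1, c⟩, _⟩
    · exact Or.inl ⟨Fin.ext e1, Or.inl c⟩
    · exact Or.inl ⟨Fin.ext e1, Or.inr c⟩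
    · exact Or.inr ⟨Fin.ext e1, Or.inl c⟩
    · exact Or.inr ⟨Fin.ext e1, Or.inr c⟩

lemma card_inc (S : Finset (Sym2 (Fin 4 × Fin n))) (v : Fin 4 × Fin n) :
    (S.filter (fun e => v ∈ e)).card
      = ∑ u : Fin 4 × Fin n, (if s(v, u) ∈ S then 1 else 0) := by
  have key : (Finset.univ.filter (fun u : Fin 4 × Fin n => s(v, u) ∈ S)).card
      = (S.filter (fun e => v ∈ e)).card := by
    apply Finset.card_bij (fun u _ => s(v, u))
    · intro a ha
      rw [Finset.mem_filter] at ha ⊢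
      exact ⟨ha.2, Sym2.mem_mk_left v a⟩
    · intro a _ b _ hab
      exact Sym2.congr_right.mp hab
    · intro e he
      rw [Finset.mem_filter] at he
      obtain ⟨b, rfl⟩ := Sym2.mem_iff_exists.mp he.2
      exact ⟨b, Finset.mem_filter.mpr ⟨Finset.mem_univ _, he.1⟩, rfl⟩
  rw [← key, Finset.card_filter]

lemma sum_pick_eq {m : ℕ} (k : ℕ) (g : Fin m → ℕ) :
    (∑ j : Fin m, if k = (j : ℕ) then g j else 0) = if h : k < m then g ⟨k, h⟩ else 0 := by
  by_cases h : k < m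
  · rw [dif_pos h, Finset.sum_eq_single ⟨k, h⟩]
    · rw [if_pos rfl]
    · intro j _ hj
      rw [if_neg]
      intro hv
      exact hj (Fin.ext hv.symm)
    · intro hmem
      exact absurd (Finset.mem_univ _) hmem
  · rw [dif_neg h]
    apply Finset.sum_eq_zero
    intro j _
    rw [if_neg]
    have := j.isLt
    omega

lemma sum_pick_succ {m : ℕ} (k : ℕ) (g : Fin m → ℕ) :
    (∑ j : Fin m, if (j : ℕ) + 1 = k then g j else 0)
      = if h : k - 1 < m ∧ 1 ≤ k then g ⟨k - 1, h.1⟩ else 0 := by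
  by_cases h : k - 1 < m ∧ 1 ≤ k
  · rw [dif_pos h, Finset.sum_eq_single ⟨k - 1, h.1⟩]
    · rw [if_pos (by simp; omega)]
    · intro j _ hj
      rw [if_neg]
      intro hv
      apply hj
      apply Fin.ext
      simp
      omega
    · intro hmem
      exact absurd (Finset.mem_univ _) hmem
  · rw [dif_neg h]
    apply Finset.sum_eq_zero
    intro j _
    rw [if_neg]
    have := j.isLt
    omega

lemma ite_toNat (b : Bool) : (if b = true then (1:ℕ) else 0) = b.toNat := by
  cases b <;> rfl

lemma deg_decodeY (y : Fin n → Col) (r : Fin 4) (i : Fin n) :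
    ((decodeY y).filter (fun e => ((r, i) : Fin 4 × Fin n) ∈ e)).card
      = (if (i : ℕ) = 0 then 0
          else ((y ⟨(i : ℕ) - 1, Nat.lt_of_le_of_lt (Nat.sub_le _ _) i.isLt⟩).2 r).toNat)
        + (if (i : ℕ) + 1 < n then ((y i).2 r).toNat else 0)
        + vbn (y i).1 (r : ℕ)
        + (if (r : ℕ) = 0 then 0 else vbn (y i).1 ((r : ℕ) - 1)) := by
  rw [card_inc]
  have hpt : ∀ u : Fin 4 × Fin n,
      (if s(((r, i) : Fin 4 × Fin n), u) ∈ decodeY y then (1:ℕ) else 0)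
        = ((if (r:ℕ) = (u.1:ℕ) then (if (i:ℕ)+1 = (u.2:ℕ) then ((y i).2 r).toNat else 0) else 0)
          + (if (r:ℕ) = (u.1:ℕ) then (if (u.2:ℕ)+1 = (i:ℕ) then ((y u.2).2 r).toNat else 0) else 0))
          + ((if (i:ℕ) = (u.2:ℕ) then (if (r:ℕ)+1 = (u.1:ℕ) then (vb (y i).1 (r:ℕ)).toNat else 0) else 0)
          + (if (i:ℕ) = (u.2:ℕ) then (if (u.1:ℕ)+1 = (r:ℕ) then (vb (y i).1 (u.1:ℕ)).toNat else 0) else 0)) := by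
    intro u
    simp only [mem_decodeY]
    unfold adjBit
    by_cases h1 : (r:ℕ) = (u.1:ℕ) <;>
    by_cases h2 : (i:ℕ) = (u.2:ℕ) <;>
    by_cases h3 : (i:ℕ)+1 = (u.2:ℕ) <;>
    by_cases h4 : (u.2:ℕ)+1 = (i:ℕ) <;>
    by_cases h5 : (r:ℕ)+1 = (u.1:ℕ) <;>
    by_cases h6 : (u.1:ℕ)+1 = (r:ℕ) <;>
    first
      | omega
      | simp [h1, h2, h3, h4, h5, h6, ite_toNat]
  simp only [hpt]
  rw [Finset.sum_add_distrib, Finset.sum_add_distrib, Finset.sum_add_distrib]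
  have SA : (∑ u : Fin 4 × Fin n, if (r:ℕ) = (u.1:ℕ) then (if (i:ℕ)+1 = (u.2:ℕ) then ((y i).2 r).toNat else 0) else 0)
      = (if (i : ℕ) + 1 < n then ((y i).2 r).toNat else 0) := by
    by_cases h : (i:ℕ)+1 < n
    · rw [if_pos h, Finset.sum_eq_single ((r, ⟨(i:ℕ)+1, h⟩) : Fin 4 × Fin n)]
      · simp
      · intro u _ hu
        by_cases h1 : (r:ℕ) = (u.1:ℕ)
        · by_cases h2 : (i:ℕ)+1 = (u.2:ℕ)
          · exact absurd (Prod.ext (Fin.ext h1) (Fin.ext h2)).symm hu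
          · simp [h2]
        · simp [h1]
      · intro hm; exact absurd (Finset.mem_univ _) hm
    · rw [if_neg h]
      apply Finset.sum_eq_zero
      intro u _
      by_cases h1 : (r:ℕ) = (u.1:ℕ)
      · have := u.2.isLt
        rw [if_pos h1, if_neg (by omega)]
      · rw [if_neg h1]
  have SB : (∑ u : Fin 4 × Fin n, if (r:ℕ) = (u.1:ℕ) then (if (u.2:ℕ)+1 = (i:ℕ) then ((y u.2).2 r).toNat else 0) else 0)
      = (if (i : ℕ) = 0 then 0
          else ((y ⟨(i : ℕ) - 1, Nat.lt_of_le_of_lt (Nat.sub_le _ _) i.isLt⟩).2 r).toNat) := by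
    by_cases h : (i:ℕ) = 0
    · rw [if_pos h]
      apply Finset.sum_eq_zero
      intro u _
      by_cases h1 : (r:ℕ) = (u.1:ℕ)
      · rw [if_pos h1, if_neg (by omega)]
      · rw [if_neg h1]
    · rw [if_neg h]
      rw [Finset.sum_eq_single ((r, ⟨(i:ℕ)-1, Nat.lt_of_le_of_lt (Nat.sub_le _ _) i.isLt⟩) : Fin 4 × Fin n)]
      · rw [if_pos rfl, if_pos (by simp; omega)]
      · intro u _ hu
        by_cases h1 : (r:ℕ) = (u.1:ℕ)
        · by_cases h2 : (u.2:ℕ)+1 = (i:ℕ)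
          · exact absurd (Prod.ext (Fin.ext h1) (Fin.ext (by simp; omega))).symm hu
          · simp [h2]
        · simp [h1]
      · intro hm; exact absurd (Finset.mem_univ _) hm
  have SC : (∑ u : Fin 4 × Fin n, if (i:ℕ) = (u.2:ℕ) then (if (r:ℕ)+1 = (u.1:ℕ) then (vb (y i).1 (r:ℕ)).toNat else 0) else 0)
      = vbn (y i).1 (r : ℕ) := by
    by_cases h : (r:ℕ)+1 < 4
    · rw [Finset.sum_eq_single ((⟨(r:ℕ)+1, h⟩, i) : Fin 4 × Fin n)]
      · rw [if_pos rfl, if_pos rfl, vbn_eq_toNat]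
      · intro u _ hu
        by_cases h1 : (i:ℕ) = (u.2:ℕ)
        · by_cases h2 : (r:ℕ)+1 = (u.1:ℕ)
          · exact absurd (Prod.ext (Fin.ext h2.symm) (Fin.ext h1.symm)) hu
          · simp [h2]
        · simp [h1]
      · intro hm; exact absurd (Finset.mem_univ _) hm
    · have hz : vbn (y i).1 (r:ℕ) = 0 := by
        unfold vbn; rw [dif_neg (by omega)]
      rw [hz]
      apply Finset.sum_eq_zero
      intro u _
      by_cases h1 : (i:ℕ) = (u.2:ℕ)
      · have := u.1.isLt
        rw [if_pos h1, if_neg (by omega)]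
      · rw [if_neg h1]
  have SD : (∑ u : Fin 4 × Fin n, if (i:ℕ) = (u.2:ℕ) then (if (u.1:ℕ)+1 = (r:ℕ) then (vb (y i).1 (u.1:ℕ)).toNat else 0) else 0)
      = (if (r : ℕ) = 0 then 0 else vbn (y i).1 ((r : ℕ) - 1)) := by
    by_cases h : (r:ℕ) = 0
    · rw [if_pos h]
      apply Finset.sum_eq_zero
      intro u _
      by_cases h1 : (i:ℕ) = (u.2:ℕ)
      · rw [if_pos h1, if_neg (by omega)]
      · rw [if_neg h1]
    · rw [if_neg h]
      have hr1 : (r:ℕ) - 1 < 4 := Nat.lt_of_le_of_lt (Nat.sub_le _ _) r.isLt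
      rw [Finset.sum_eq_single ((⟨(r:ℕ)-1, hr1⟩, i) : Fin 4 × Fin n)]
      · rw [if_pos rfl, if_pos (show ((⟨(r:ℕ)-1, hr1⟩ : Fin 4) : ℕ) + 1 = (r:ℕ) by show (r:ℕ)-1+1 = (r:ℕ); omega), vbn_eq_toNat]
      · intro u _ hu
        by_cases h1 : (i:ℕ) = (u.2:ℕ)
        · by_cases h2 : (u.1:ℕ)+1 = (r:ℕ)
          · exact absurd (Prod.ext (Fin.ext (show (u.1:ℕ) = ((⟨(r:ℕ)-1, hr1⟩ : Fin 4) : ℕ) by show (u.1:ℕ) = (r:ℕ)-1; omega)) (Fin.ext h1.symm)) hu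
          · simp [h2]
        · simp [h1]
      · intro hm; exact absurd (Finset.mem_univ _) hm
  rw [SA, SB, SC, SD]
  ring

def yg {m : ℕ} (z : Fin m → Col) (j : ℕ) : Col :=
  if h : j < m then z ⟨j, h⟩ else (fun _ => false, botSt)

lemma yg_tail {m : ℕ} (z : Fin (m+1) → Col) (j : ℕ) :
    yg (Fin.tail z) j = yg z (j+1) := by
  unfold yg
  by_cases h : j < m
  · rw [dif_pos h, dif_pos (by omega)]
    rfl
  · rw [dif_neg h, dif_neg (by omega)]

lemma yg_zero {m : ℕ} (z : Fin (m+1) → Col) : yg z 0 = z 0 := by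
  unfold yg
  rw [dif_pos (Nat.succ_pos m)]
  exact congrArg z (Fin.ext (by simp))

lemma yg_fin {m : ℕ} (z : Fin m → Col) (i : Fin m) : yg z (i : ℕ) = z i := by
  unfold yg
  rw [dif_pos i.isLt]

def flatGood (m : ℕ) (a : St) (z : Fin m → Col) : Prop :=
  (∀ j, j < m → colOK (if j = 0 then a else (yg z (j-1)).2) (yg z j).1 (yg z j).2)
  ∧ (if m = 0 then a else (yg z (m-1)).2) = botSt

lemma goodFrom_iff_flat : ∀ (m : ℕ) (a : St) (z : Fin m → Col),
    goodFrom m a z ↔ flatGood m a z := by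
  intro m
  induction m with
  | zero =>
    intro a z
    show (a = botSt) ↔ _
    unfold flatGood
    simp
  | succ m ih =>
    intro a z
    show (colOK a (z 0).1 (z 0).2 ∧ goodFrom m (z 0).2 (Fin.tail z)) ↔ _
    rw [ih ((z 0).2) (Fin.tail z)]
    unfold flatGood
    simp only [yg_tail]
    constructor
    · rintro ⟨h0, hcols, hlast⟩
      refine ⟨?_, ?_⟩
      · intro j hj
        cases j with
        | zero => simpa [yg_zero] using h0
        | succ j' =>
          have hcc := hcols j' (by omega)
          by_cases hj0 : j' = 0
          · subst hj0
            simpa [yg_zero] using hcc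
          · rw [if_neg hj0, show j' - 1 + 1 = j' by omega] at hcc
            rw [if_neg (by omega), show j' + 1 - 1 = j' by omega]
            exact hcc
      · by_cases hm : m = 0
        · subst hm
          rw [if_pos rfl] at hlast
          rw [if_neg (by omega)]
          simpa [yg_zero] using hlast
        · rw [if_neg hm, show m - 1 + 1 = m by omega] at hlast
          rw [if_neg (by omega), show m + 1 - 1 = m by omega]
          exact hlast
    · rintro ⟨hcols, hlast⟩
      refine ⟨?_, ?_, ?_⟩
      · have hcc := hcols 0 (by omega)
        simpa [yg_zero] using hcc
      · intro j' hj'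
        have hcc := hcols (j'+1) (by omega)
        by_cases hj0 : j' = 0
        · subst hj0
          simpa [yg_zero] using hcc
        · rw [if_neg (by omega), show j' + 1 - 1 = j' by omega] at hcc
          rw [if_neg hj0, show j' - 1 + 1 = j' by omega]
          exact hcc
      · by_cases hm : m = 0
        · subst hm
          rw [if_neg (by omega)] at hlast
          rw [if_pos rfl]
          simpa [yg_zero] using hlast
        · rw [if_neg (by omega), show m + 1 - 1 = m by omega] at hlast
          rw [if_neg hm, show m - 1 + 1 = m by omega]
          exact hlast

lemma deg_eq_degAt (y : Fin n → Col) (hlast : ∀ h : 0 < n, (y ⟨n-1, Nat.sub_lt h Nat.one_pos⟩).2 = botSt)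
    (r : Fin 4) (i : Fin n) :
    ((decodeY y).filter (fun e => ((r, i) : Fin 4 × Fin n) ∈ e)).card
      = degAt (if (i : ℕ) = 0 then botSt else (yg y ((i : ℕ)-1)).2) (y i).1 (y i).2 r := by
  rw [deg_decodeY]
  unfold degAt
  have hRe : (if (i:ℕ)+1 < n then ((y i).2 r).toNat else 0) = ((y i).2 r).toNat := by
    by_cases hin : (i:ℕ)+1 < n
    · rw [if_pos hin]
    · rw [if_neg hin]
      have hi : i = ⟨n-1, by omega⟩ := Fin.ext (by show (i:ℕ) = n-1; have := i.isLt; omega)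
      rw [hi, hlast (by have := i.isLt; omega)]
      rfl
  have hLe : (if (i : ℕ) = 0 then 0
          else ((y ⟨(i : ℕ) - 1, Nat.lt_of_le_of_lt (Nat.sub_le _ _) i.isLt⟩).2 r).toNat)
      = ((if (i : ℕ) = 0 then botSt else (yg y ((i : ℕ)-1)).2) r).toNat := by
    by_cases hi0 : (i:ℕ) = 0
    · rw [if_pos hi0, if_pos hi0]
      rfl
    · rw [if_neg hi0, if_neg hi0]
      unfold yg
      rw [dif_pos (Nat.lt_of_le_of_lt (Nat.sub_le _ _) i.isLt)]
  rw [hRe, hLe]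

lemma hlast_of_flat (y : Fin n → Col) (hfl : flatGood n botSt y) :
    ∀ h : 0 < n, (y ⟨n-1, Nat.sub_lt h Nat.one_pos⟩).2 = botSt := by
  intro h
  have := hfl.2
  rw [if_neg (by omega)] at this
  rw [← this]
  unfold yg
  rw [dif_pos (by omega)]

lemma decodeY_degCond (y : Fin n → Col) (hy : goodFrom n botSt y) :
    ∀ v : Fin 4 × Fin n, ((decodeY y).filter (fun e => v ∈ e)).card = 0
      ∨ ((decodeY y).filter (fun e => v ∈ e)).card = 2 := by
  have hfl := (goodFrom_iff_flat n botSt y).1 hy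
  intro v
  rcases v with ⟨r, i⟩
  rw [deg_eq_degAt y (hlast_of_flat y hfl) r i]
  have hcc := hfl.1 (i : ℕ) i.isLt
  rw [yg_fin] at hcc
  exact hcc r

def encodeS (S : Finset (Sym2 (Fin 4 × Fin n))) : Fin n → Col :=
  fun i =>
    (fun k => decide (s(((⟨(k:ℕ), Nat.lt_of_lt_of_le k.isLt (by omega)⟩, i) : Fin 4 × Fin n),
        ((⟨(k:ℕ)+1, Nat.succ_lt_succ (Nat.lt_of_lt_of_le k.isLt (by omega))⟩, i) : Fin 4 × Fin n)) ∈ S),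
     fun r => if h : (i:ℕ)+1 < n then
        decide (s(((r, i) : Fin 4 × Fin n), ((r, ⟨(i:ℕ)+1, h⟩) : Fin 4 × Fin n)) ∈ S)
      else false)

lemma encodeS_last (S : Finset (Sym2 (Fin 4 × Fin n))) (h : 0 < n) :
    (encodeS S ⟨n-1, Nat.sub_lt h Nat.one_pos⟩).2 = botSt := by
  funext r
  show (if h' : (n-1)+1 < n then _ else false) = false
  rw [dif_neg (by omega)]

lemma decode_encode (S : Finset (Sym2 (Fin 4 × Fin n)))
    (hS : S ⊆ (gridGraph 4 n).edgeFinset) : decodeY (encodeS S) = S := by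
  ext e
  induction e using Sym2.ind with
  | _ u v =>
    rw [mem_decodeY]
    unfold adjBit
    simp only [Bool.or_eq_true, Bool.and_eq_true, decide_eq_true_eq]
    constructor
    · rintro (((⟨⟨e1, c⟩, hb⟩ | ⟨⟨e1, c⟩, hb⟩) | ⟨⟨e1, c⟩, hb⟩) | ⟨⟨e1, c⟩, hb⟩)
      · -- A : right-horizontal at u
        have hg : (u.2:ℕ)+1 < n := by rw [c]; exact v.2.isLt
        have hb' : (if h : (u.2:ℕ)+1 < n then
            decide (s(((u.1, u.2) : Fin 4 × Fin n), ((u.1, ⟨(u.2:ℕ)+1, h⟩) : Fin 4 × Fin n)) ∈ S)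
            else false) = true := hb
        rw [dif_pos hg] at hb'
        have hm := of_decide_eq_true hb'
        rw [show v = ((u.1, ⟨(u.2:ℕ)+1, hg⟩) : Fin 4 × Fin n) from
          Prod.ext (Fin.ext e1.symm) (Fin.ext c.symm)]
        exact hm
      · -- B : left-horizontal (edge from v to u)
        have hg : (v.2:ℕ)+1 < n := by rw [c]; exact u.2.isLt
        have hb' : (if h : (v.2:ℕ)+1 < n then
            decide (s(((u.1, v.2) : Fin 4 × Fin n), ((u.1, ⟨(v.2:ℕ)+1, h⟩) : Fin 4 × Fin n)) ∈ S)
            else false) = true := hb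
        rw [dif_pos hg] at hb'
        have hm := of_decide_eq_true hb'
        rw [Sym2.eq_swap]
        rw [show v = ((u.1, v.2) : Fin 4 × Fin n) from Prod.ext (Fin.ext e1.symm) rfl]
        rw [show u = ((u.1, ⟨(v.2:ℕ)+1, hg⟩) : Fin 4 × Fin n) from
          Prod.ext rfl (Fin.ext c.symm)]
        exact hm
      · -- C : vertical at u, going up
        have h3 : (u.1:ℕ) < 3 := by have := v.1.isLt; omega
        have hb' : (if h : (u.1:ℕ) < 3 then (encodeS S u.2).1 ⟨(u.1:ℕ), h⟩ else false) = true := hb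
        rw [dif_pos h3] at hb'
        have hm := of_decide_eq_true hb'
        rw [show v = ((⟨(u.1:ℕ)+1, by omega⟩ : Fin 4), u.2) from
          Prod.ext (Fin.ext c.symm) (Fin.ext e1.symm)]
        exact hm
      · -- D : vertical from v to u
        have h3 : (v.1:ℕ) < 3 := by have := u.1.isLt; omega
        have hb' : (if h : (v.1:ℕ) < 3 then (encodeS S u.2).1 ⟨(v.1:ℕ), h⟩ else false) = true := hb
        rw [dif_pos h3] at hb'
        have hm := of_decide_eq_true hb'
        have he : s((((⟨(v.1:ℕ), by omega⟩ : Fin 4), u.2) : Fin 4 × Fin n),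
            (((⟨(v.1:ℕ)+1, by omega⟩ : Fin 4), u.2) : Fin 4 × Fin n)) = s(v, u) := by
          congr 1
          exacts [Prod.ext (Fin.ext rfl) (Fin.ext e1),
            Prod.ext (Fin.ext c) rfl]
        rw [Sym2.eq_swap]
        exact he ▸ hm
    · intro hmem
      have hadj : gridAdj 4 n u v := by
        have hedge := hS hmem
        rw [SimpleGraph.mem_edgeFinset, SimpleGraph.mem_edgeSet] at hedge
        exact hedge
      rcases hadj with ⟨h1, h2 | h2⟩ | ⟨h1, h2 | h2⟩
      · -- right horizontal
        refine Or.inl (Or.inl (Or.inl ⟨⟨congrArg Fin.val h1, h2⟩, ?_⟩))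
        have hg : (u.2:ℕ)+1 < n := by rw [h2]; exact v.2.isLt
        show (if h : (u.2:ℕ)+1 < n then
            decide (s(((u.1, u.2) : Fin 4 × Fin n), ((u.1, ⟨(u.2:ℕ)+1, h⟩) : Fin 4 × Fin n)) ∈ S)
            else false) = true
        rw [dif_pos hg]
        apply decide_eq_true
        rw [show ((u.1, (⟨(u.2:ℕ)+1, hg⟩ : Fin n)) : Fin 4 × Fin n) = v from
          Prod.ext h1 (Fin.ext h2)]
        exact hmem
      · -- left horizontal
        refine Or.inl (Or.inl (Or.inr ⟨⟨congrArg Fin.val h1, h2⟩, ?_⟩))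
        have hg : (v.2:ℕ)+1 < n := by rw [h2]; exact u.2.isLt
        show (if h : (v.2:ℕ)+1 < n then
            decide (s(((u.1, v.2) : Fin 4 × Fin n), ((u.1, ⟨(v.2:ℕ)+1, h⟩) : Fin 4 × Fin n)) ∈ S)
            else false) = true
        rw [dif_pos hg]
        apply decide_eq_true
        rw [show ((u.1, v.2) : Fin 4 × Fin n) = v from Prod.ext h1 rfl]
        rw [show ((u.1, (⟨(v.2:ℕ)+1, hg⟩ : Fin n)) : Fin 4 × Fin n) = u from
          Prod.ext rfl (Fin.ext h2)]
        rw [Sym2.eq_swap]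
        exact hmem
      · -- vertical up
        refine Or.inl (Or.inr ⟨⟨congrArg Fin.val h1, h2⟩, ?_⟩)
        have h3 : (u.1:ℕ) < 3 := by have := v.1.isLt; omega
        show (if h : (u.1:ℕ) < 3 then (encodeS S u.2).1 ⟨(u.1:ℕ), h⟩ else false) = true
        rw [dif_pos h3]
        apply decide_eq_true
        have he : s((((⟨(u.1:ℕ), by omega⟩ : Fin 4), u.2) : Fin 4 × Fin n),
            (((⟨(u.1:ℕ)+1, by omega⟩ : Fin 4), u.2) : Fin 4 × Fin n)) = s(u, v) := by
          congr 1
          exact Prod.ext (Fin.ext h2) h1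
        exact he.symm ▸ hmem
      · -- vertical down
        refine Or.inr ⟨⟨congrArg Fin.val h1, h2⟩, ?_⟩
        have h3 : (v.1:ℕ) < 3 := by have := u.1.isLt; omega
        show (if h : (v.1:ℕ) < 3 then (encodeS S u.2).1 ⟨(v.1:ℕ), h⟩ else false) = true
        rw [dif_pos h3]
        apply decide_eq_true
        have he : s((((⟨(v.1:ℕ), by omega⟩ : Fin 4), u.2) : Fin 4 × Fin n),
            (((⟨(v.1:ℕ)+1, by omega⟩ : Fin 4), u.2) : Fin 4 × Fin n)) = s(v, u) := by
          congr 1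
          exacts [Prod.ext (Fin.ext rfl) h1, Prod.ext (Fin.ext h2) rfl]
        exact (he.trans Sym2.eq_swap).symm ▸ hmem

lemma adjBit_horiz (y : Fin n → Col) (r : Fin 4) (i : Fin n) (h : (i:ℕ)+1 < n) :
    adjBit y (r, i) (r, ⟨(i:ℕ)+1, h⟩) = (y i).2 r := by
  cases hb : (y i).2 r
  · rw [Bool.eq_false_iff]
    intro hT
    unfold adjBit at hT
    simp only [Bool.or_eq_true, Bool.and_eq_true, decide_eq_true_eq] at hT
    rcases hT with (((⟨⟨e1, c⟩, hb'⟩ | ⟨⟨e1, c⟩, hb'⟩) | ⟨⟨e1, c⟩, hb'⟩) | ⟨⟨e1, c⟩, hb'⟩) <;>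
      first
        | omega
        | (rw [hb'] at hb; exact Bool.noConfusion hb)
  · unfold adjBit
    simp [hb]

lemma adjBit_vert (y : Fin n → Col) (i : Fin n) (k : Fin 3) :
    adjBit y ((⟨(k:ℕ), Nat.lt_of_lt_of_le k.isLt (by omega)⟩ : Fin 4), i)
      ((⟨(k:ℕ)+1, Nat.succ_lt_succ (Nat.lt_of_lt_of_le k.isLt (by omega))⟩ : Fin 4), i)
        = (y i).1 k := by
  cases hb : (y i).1 k
  · rw [Bool.eq_false_iff]
    intro hT
    unfold adjBit at hT
    simp only [Bool.or_eq_true, Bool.and_eq_true, decide_eq_true_eq] at hT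
    rcases hT with (((⟨⟨e1, c⟩, hb'⟩ | ⟨⟨e1, c⟩, hb'⟩) | ⟨⟨e1, c⟩, hb'⟩) | ⟨⟨e1, c⟩, hb'⟩) <;>
      first
        | omega
        | (have t : (y i).1 k = true := by
             unfold vb at hb'
             rwa [dif_pos k.isLt] at hb'
           rw [t] at hb; exact Bool.noConfusion hb)
  · unfold adjBit
    simp [hb, vb, k.isLt]

lemma encode_decode (y : Fin n → Col) (hy : goodFrom n botSt y) :
    encodeS (decodeY y) = y := by
  have hlast := hlast_of_flat y ((goodFrom_iff_flat n botSt y).1 hy)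
  funext i
  have h1 : (encodeS (decodeY y) i).1 = (y i).1 := by
    funext k
    show decide (s(((⟨(k:ℕ), Nat.lt_of_lt_of_le k.isLt (by omega)⟩, i) : Fin 4 × Fin n),
        ((⟨(k:ℕ)+1, Nat.succ_lt_succ (Nat.lt_of_lt_of_le k.isLt (by omega))⟩, i)
          : Fin 4 × Fin n)) ∈ decodeY y) = (y i).1 k
    rw [decide_eq_decide.mpr (mem_decodeY y _ _), Bool.decide_coe]
    exact adjBit_vert y i k
  have h2 : (encodeS (decodeY y) i).2 = (y i).2 := by
    funext r
    show (if h : (i:ℕ)+1 < n then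
        decide (s(((r, i) : Fin 4 × Fin n), ((r, ⟨(i:ℕ)+1, h⟩) : Fin 4 × Fin n)) ∈ decodeY y)
      else false) = (y i).2 r
    by_cases h : (i:ℕ)+1 < n
    · rw [dif_pos h, decide_eq_decide.mpr (mem_decodeY y _ _), Bool.decide_coe]
      exact adjBit_horiz y r i h
    · rw [dif_neg h]
      have hi : i = ⟨n-1, Nat.sub_lt (by omega) Nat.one_pos⟩ :=
        Fin.ext (by show (i:ℕ) = n-1; have := i.isLt; omega)
      rw [hi, hlast (by have := i.isLt; omega)]
      rfl
  exact Prod.ext h1 h2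

lemma encodeS_good (S : Finset (Sym2 (Fin 4 × Fin n)))
    (hsub : S ⊆ (gridGraph 4 n).edgeFinset)
    (hdeg : ∀ v : Fin 4 × Fin n, (S.filter (fun e => v ∈ e)).card = 0
      ∨ (S.filter (fun e => v ∈ e)).card = 2) :
    goodFrom n botSt (encodeS S) := by
  rw [goodFrom_iff_flat]
  have hlast : ∀ h : 0 < n, (encodeS S ⟨n-1, Nat.sub_lt h Nat.one_pos⟩).2 = botSt :=
    fun h => encodeS_last S h
  constructor
  · intro j hj
    intro r
    have hdd := deg_eq_degAt (encodeS S) hlast r ⟨j, hj⟩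
    rw [decode_encode S hsub] at hdd
    have := hdeg (r, ⟨j, hj⟩)
    rw [hdd] at this
    have hyg : yg (encodeS S) j = encodeS S ⟨j, hj⟩ := by
      unfold yg; rw [dif_pos hj]
    rw [hyg]
    have hco : ((⟨j, hj⟩ : Fin n) : ℕ) = j := rfl
    rw [hco] at this
    exact this
  · by_cases h : n = 0
    · subst h
      rw [if_pos rfl]
    · rw [if_neg h]
      have := hlast (by omega)
      rw [← this]
      unfold yg
      rw [dif_pos (by omega)]

lemma count_main (n : ℕ) :
    (((gridGraph 4 n).edgeFinset.powerset).filter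
      (fun S => ∀ v : Fin 4 × Fin n, (S.filter (fun e => v ∈ e)).card = 0
        ∨ (S.filter (fun e => v ∈ e)).card = 2)).card = Fn n botSt := by
  rw [← countGood n botSt]
  refine (Finset.card_bij (fun (y : Fin n → Col) (_ : y ∈ Finset.univ.filter
      (fun y => goodFrom n botSt y)) => decodeY y) ?_ ?_ ?_).symm
  · intro y hy
    have hgood := (Finset.mem_filter.mp hy).2
    rw [Finset.mem_filter]
    exact ⟨Finset.mem_powerset.mpr (decodeY_subset y), decodeY_degCond y hgood⟩
  · intro y hy y' hy' heq
    have g := (Finset.mem_filter.mp hy).2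
    have g' := (Finset.mem_filter.mp hy').2
    have heq' : decodeY y = decodeY y' := heq
    rw [← encode_decode y g, ← encode_decode y' g', heq']
  · intro S hS
    rw [Finset.mem_filter, Finset.mem_powerset] at hS
    refine ⟨encodeS S, ?_, decode_encode S hS.1⟩
    rw [Finset.mem_filter]
    exact ⟨Finset.mem_univ _, encodeS_good S hS.1 hS.2⟩

lemma msap_eq (n : ℕ) : msapCount 4 n + 1 = Fn n botSt := by
  rw [← count_main n]
  set Q := ((gridGraph 4 n).edgeFinset.powerset).filter
      (fun S => ∀ v : Fin 4 × Fin n, (S.filter (fun e => v ∈ e)).card = 0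
        ∨ (S.filter (fun e => v ∈ e)).card = 2) with hQdef
  have hQm : msapFinset 4 n = Q.erase ∅ := by
    ext S
    rw [Finset.mem_erase, hQdef, msapFinset, Finset.mem_filter, Finset.mem_filter]
    constructor
    · rintro ⟨hp, hne, hdeg⟩
      exact ⟨hne, hp, hdeg⟩
    · rintro ⟨hne, hp, hdeg⟩
      exact ⟨hp, hne, hdeg⟩
  have h0 : (∅ : Finset (Sym2 (Fin 4 × Fin n))) ∈ Q := by
    rw [hQdef, Finset.mem_filter]
    refine ⟨Finset.empty_mem_powerset _, fun v => Or.inl ?_⟩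
    simp
  unfold msapCount
  rw [hQm, Finset.card_erase_of_mem h0]
  have : 0 < Q.card := Finset.card_pos.mpr ⟨∅, h0⟩
  omega

end GridSide

/-- Bounds on the number of multiple self-avoiding polygons in the 4×n grid. -/
theorem msap_four_by_n (n : ℕ) (hn : 4 ≤ n) :
    8 * ((49 : ℝ) / 8) ^ (n - 2) - 1 ≤ (msapCount 4 n : ℝ) ∧
    (msapCount 4 n : ℝ) ≤ (9520 : ℝ) / 27 * ((155 : ℝ) / 22) ^ (n - 4) - 1 := by
  have hq : (msapCount 4 n : ℝ) + 1 = (Fn n botSt : ℝ) := by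
    rw [← msap_eq n]
    push_cast
    ring
  constructor
  · have h1 := P1 (n-2)
    rw [show n - 2 + 2 = n by omega] at h1
    have h1' : ((49:ℝ))^(n-2) * 8 ≤ (8:ℝ)^(n-2) * (Fn n botSt : ℝ) := by exact_mod_cast h1
    have hpow : (0:ℝ) < (8:ℝ)^(n-2) := by positivity
    have hkey : ((49:ℝ)^(n-2) * 8) / (8:ℝ)^(n-2) ≤ (Fn n botSt : ℝ) := by
      rw [div_le_iff₀ hpow]
      calc (49:ℝ)^(n-2)*8 ≤ (8:ℝ)^(n-2) * (Fn n botSt : ℝ) := h1'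
        _ = (Fn n botSt : ℝ) * (8:ℝ)^(n-2) := by ring
    rw [div_pow, show (8:ℝ) * ((49:ℝ)^(n-2) / (8:ℝ)^(n-2)) - 1
      = ((49:ℝ)^(n-2) * 8) / (8:ℝ)^(n-2) - 1 by ring]
    linarith [hkey, hq]
  · have h2 := P2 (n-4)
    rw [show n - 4 + 4 = n by omega] at h2
    have h2' : (27:ℝ) * ((22:ℝ)^(n-4) * (Fn n botSt : ℝ)) ≤ 9520 * (155:ℝ)^(n-4) := by
      exact_mod_cast h2
    have hpow : (0:ℝ) < (22:ℝ)^(n-4) := by positivity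
    have hkey : (Fn n botSt : ℝ) ≤ 9520/27 * ((155:ℝ)/22)^(n-4) := by
      rw [div_pow, show (9520:ℝ)/27 * ((155:ℝ)^(n-4) / (22:ℝ)^(n-4))
        = (9520 * (155:ℝ)^(n-4)) / (27 * (22:ℝ)^(n-4)) by ring]
      rw [le_div_iff₀ (by positivity)]
      nlinarith [h2']
    linarith [hq, hkey]
end

section
/- For every n ≥ 3, p_{n×n} ≥ (17/10)^((n−2)²), and hence liminf_{n→∞} (p_{n×n})^(1/n²) ≥ 17/10 > 1; in particular p_{n×n} grows at least exponentially in n². -/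
namespace MSAP

noncomputable def fB (x y : Bool) : ℝ := if x = y then 1 else 7/10

noncomputable def wRow : List Bool → ℝ
  | [] => 1
  | [_] => 1
  | x :: y :: t => fB x y * wRow (y :: t)

def okB (a b x y : Bool) : Bool := !((a != b) && (x == b) && (y == a))

def compatRow : List Bool → List Bool → Bool
  | a :: b :: r, x :: y :: s => okB a b x y && compatRow (b :: r) (y :: s)
  | _, _ => true

def rowsF : ℕ → Finset (List Bool)
  | 0 => {[]}
  | k+1 => (Finset.univ ×ˢ rowsF k).image (fun p => p.1 :: p.2)

lemma mem_rowsF_length {m : ℕ} {r : List Bool} (h : r ∈ rowsF m) : r.length = m := by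
  induction m generalizing r with
  | zero => simp [rowsF] at h; simp [h]
  | succ k ih =>
    simp only [rowsF, Finset.mem_image, Finset.mem_product] at h
    obtain ⟨⟨x, s⟩, ⟨_, hs⟩, rfl⟩ := h
    simp [ih hs]

lemma mem_rowsF_of_length {m : ℕ} {r : List Bool} (h : r.length = m) : r ∈ rowsF m := by
  induction m generalizing r with
  | zero => simp [List.length_eq_zero_iff] at h; simp [h, rowsF]
  | succ k ih =>
    match r with
    | [] => simp at h
    | x :: s =>
      simp only [rowsF, Finset.mem_image, Finset.mem_product]
      exact ⟨(x, s), ⟨Finset.mem_univ _, ih (by simpa using h)⟩, rfl⟩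

lemma sum_rowsF_succ (k : ℕ) (F : List Bool → ℝ) :
    ∑ s ∈ rowsF (k+1), F s = ∑ s ∈ rowsF k, (F (true :: s) + F (false :: s)) := by
  rw [rowsF, Finset.sum_image (by rintro ⟨a,b⟩ h ⟨c,d⟩ h' e; simpa using e)]
  rw [Finset.sum_product, Fintype.sum_bool, ← Finset.sum_add_distrib]

/-- sum of weights of rows compatible with `r` having given first entry -/
noncomputable def SB (r : List Bool) (x : Bool) : ℝ :=
  ∑ s ∈ rowsF r.length, if compatRow r s ∧ s.head? = some x then wRow s else 0

lemma SB_single (a x : Bool) : SB [a] x = 1 := by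
  simp only [SB, List.length_cons, List.length_nil, sum_rowsF_succ]
  simp [rowsF, compatRow, wRow]
  cases x <;> simp

lemma SB_rec (a b x : Bool) (t : List Bool) :
    SB (a :: b :: t) x =
      (if okB a b x true then fB x true * SB (b :: t) true else 0) +
      (if okB a b x false then fB x false * SB (b :: t) false else 0) := by
  have hlen : (a :: b :: t).length = (b :: t).length + 1 := by simp
  rw [SB, hlen, sum_rowsF_succ]
  have key : ∀ s ∈ rowsF (b :: t).length,
      ((if compatRow (a::b::t) (true::s) ∧ (true::s).head? = some x then wRow (true::s) else 0) +
       (if compatRow (a::b::t) (false::s) ∧ (false::s).head? = some x then wRow (false::s) else 0)) =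
      ((if okB a b x true then fB x true *
          (if compatRow (b::t) s ∧ s.head? = some true then wRow s else 0) else 0) +
       (if okB a b x false then fB x false *
          (if compatRow (b::t) s ∧ s.head? = some false then wRow s else 0) else 0)) := by
    intro s hs
    obtain ⟨y, s2, rfl⟩ : ∃ y s2, s = y :: s2 := by
      have := mem_rowsF_length hs
      cases s with
      | nil => simp at this
      | cons y s2 => exact ⟨y, s2, rfl⟩
    show (if (okB a b true y && compatRow (b::t) (y::s2)) = true ∧ some true = some x
            then fB true y * wRow (y::s2) else 0) +
         (if (okB a b false y && compatRow (b::t) (y::s2)) = true ∧ some false = some x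
            then fB false y * wRow (y::s2) else 0) = _
    cases x <;> cases y <;>
      simp [Bool.and_eq_true] <;>
      by_cases h1 : okB a b true true = true <;>
      by_cases h2 : okB a b true false = true <;>
      by_cases h3 : okB a b false true = true <;>
      by_cases h4 : okB a b false false = true <;>
      by_cases h5 : compatRow (b::t) (true::s2) = true <;>
      by_cases h6 : compatRow (b::t) (false::s2) = true <;>
      simp [h1, h2, h3, h4, h5, h6]
  rw [Finset.sum_congr rfl key, Finset.sum_add_distrib]
  congr 1 <;>
  · split_ifs <;> simp [SB, Finset.mul_sum]

noncomputable def gg : List Bool → Bool → ℝ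
  | [], _ => 1
  | [_], _ => 1
  | a :: b :: _, x => if a = b then 1/2 else (if x = a then 13/20 else 2/5)

lemma fB_pos (x y : Bool) : 0 < fB x y := by
  unfold fB; split <;> norm_num

lemma fB_le_one (x y : Bool) : fB x y ≤ 1 := by
  unfold fB; split <;> norm_num

lemma wRow_pos : ∀ r, 0 < wRow r
  | [] => by norm_num [wRow]
  | [_] => by norm_num [wRow]
  | x :: y :: t => by
      have := wRow_pos (y :: t)
      have := fB_pos x y
      rw [wRow]; positivity

lemma wRow_le_one : ∀ r, wRow r ≤ 1
  | [] => by norm_num [wRow]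
  | [_] => by norm_num [wRow]
  | x :: y :: t => by
      have h1 := wRow_le_one (y :: t)
      have h2 := wRow_pos (y :: t)
      have h3 := fB_pos x y
      have h4 := fB_le_one x y
      rw [wRow]; nlinarith

lemma gg_cases (b : Bool) (t : List Bool) :
    (gg (b::t) b = 1 ∧ gg (b::t) (!b) = 1) ∨
    (gg (b::t) b = 1/2 ∧ gg (b::t) (!b) = 1/2) ∨
    (gg (b::t) b = 13/20 ∧ gg (b::t) (!b) = 2/5) := by
  match t with
  | [] => left; simp [gg]
  | c :: t' =>
    by_cases h : b = c
    · right; left; simp [gg, h]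
    · right; right; cases b <;> cases c <;> simp_all [gg]

lemma SB_ge (t : List Bool) : ∀ (a x : Bool),
    (17/10)^((a::t).length - 1) * wRow (a::t) * gg (a::t) x ≤ SB (a::t) x := by
  induction t with
  | nil => intro a x; simp [SB_single, gg, wRow]
  | cons b t' ih =>
    intro a x
    rw [SB_rec]
    have hw := wRow_pos (b::t')
    set K : ℝ := (17/10)^((b::t').length - 1) * wRow (b::t') with hKdef
    have hK : 0 < K := by positivity
    have h0 := ih b b
    have h1 := ih b (!b)
    rw [← hKdef] at h0 h1
    have hpow : ((17:ℝ)/10)^((a::b::t').length - 1)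
        = (17/10)^((b::t').length - 1) * (17/10) := by
      simp [pow_succ]
    have hwc : wRow (a::b::t') = fB a b * wRow (b::t') := by rw [wRow]
    rw [hpow, hwc]
    have hSrw : (17/10)^((b::t').length-1) * (17/10) * (fB a b * wRow (b::t')) * gg (a::b::t') x
        = (17/10) * fB a b * gg (a::b::t') x * K := by rw [hKdef]; ring
    rw [hSrw]
    clear hKdef hSrw hpow hwc hw
    rcases gg_cases b t' with ⟨e0,e1⟩|⟨e0,e1⟩|⟨e0,e1⟩ <;>
      rw [e0] at h0 <;> rw [e1] at h1 <;>
      cases a <;> cases b <;> cases x <;>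
      simp only [Bool.not_true, Bool.not_false] at h1 <;>
      simp only [okB, fB, gg] <;> norm_num <;> linarith


/-- total weighted sum of rows compatible with r -/
noncomputable def ST (r : List Bool) : ℝ :=
  ∑ s ∈ rowsF r.length, if compatRow r s then wRow s else 0

lemma ST_eq (a : Bool) (t : List Bool) : ST (a::t) = SB (a::t) true + SB (a::t) false := by
  unfold ST SB
  rw [← Finset.sum_add_distrib]
  apply Finset.sum_congr rfl
  intro s hs
  obtain ⟨y, s2, rfl⟩ : ∃ y s2, s = y :: s2 := by
    have := mem_rowsF_length hs
    cases s with
    | nil => simp at this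
    | cons y s2 => exact ⟨y, s2, rfl⟩
  by_cases h : compatRow (a::t) (y::s2) = true <;> cases y <;> simp [h]

lemma ST_ge (a : Bool) (t : List Bool) :
    (17/10)^((a::t).length - 1) * wRow (a::t) ≤ ST (a::t) := by
  rw [ST_eq]
  have h0 := SB_ge t a true
  have h1 := SB_ge t a false
  have hgg : 1 ≤ gg (a::t) true + gg (a::t) false := by
    match t with
    | [] => norm_num [gg]
    | b :: t' =>
      by_cases h : a = b
      · norm_num [gg, h]
      · cases a <;> cases b <;> simp_all [gg] <;> norm_num
  have hw := wRow_pos (a::t)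
  have hp : (0:ℝ) < (17/10)^((a::t).length - 1) := by positivity
  have hPw : (0:ℝ) ≤ (17/10)^((a::t).length - 1) * wRow (a::t) := by positivity
  calc (17/10)^((a::t).length - 1) * wRow (a::t)
      = ((17/10)^((a::t).length - 1) * wRow (a::t)) * 1 := (mul_one _).symm
    _ ≤ ((17/10)^((a::t).length - 1) * wRow (a::t)) * (gg (a::t) true + gg (a::t) false) :=
        mul_le_mul_of_nonneg_left hgg hPw
    _ = (17/10)^((a::t).length - 1) * wRow (a::t) * gg (a::t) true
        + (17/10)^((a::t).length - 1) * wRow (a::t) * gg (a::t) false := by ring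
    _ ≤ SB (a::t) true + SB (a::t) false := add_le_add h0 h1

lemma sum_wRow : ∀ m : ℕ, 1 ≤ m → ∑ r ∈ rowsF m, wRow r = 2 * (17/10)^(m-1) := by
  intro m
  induction m with
  | zero => omega
  | succ k ih =>
    intro _
    rcases Nat.lt_or_ge k 1 with h | hk
    · have : k = 0 := by omega
      subst this
      rw [sum_rowsF_succ]
      simp [rowsF, wRow]
      norm_num
    · 
      rw [sum_rowsF_succ]
      have key : ∀ s ∈ rowsF k, wRow (true::s) + wRow (false::s) = (17/10) * wRow s := by
        intro s hs
        obtain ⟨y, s2, rfl⟩ : ∃ y s2, s = y :: s2 := by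
          have := mem_rowsF_length hs
          cases s with
          | nil => simp at this; omega
          | cons y s2 => exact ⟨y, s2, rfl⟩
        show fB true y * wRow (y::s2) + fB false y * wRow (y::s2) = _
        cases y <;> simp [fB] <;> ring
      rw [Finset.sum_congr rfl key, ← Finset.mul_sum, ih hk]
      have : k + 1 - 1 = (k - 1) + 1 := by omega
      rw [this, pow_succ]
      ring

/-- grids with m columns and k rows; head of list is newest (top) row -/
def gridsF (m : ℕ) : ℕ → Finset (List (List Bool))
  | 0 => {[]}
  | k+1 => (((rowsF m) ×ˢ gridsF m k).filter
      (fun p => compatRow p.2.headI p.1)).image (fun p => p.1 :: p.2)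

lemma mem_gridsF_length {m k : ℕ} {g : List (List Bool)} (h : g ∈ gridsF m k) :
    g.length = k := by
  induction k generalizing g with
  | zero => simp [gridsF] at h; simp [h]
  | succ k ih =>
    simp only [gridsF, Finset.mem_image, Finset.mem_filter, Finset.mem_product] at h
    obtain ⟨⟨s, g'⟩, ⟨⟨_, hg'⟩, _⟩, rfl⟩ := h
    simp [ih hg']

lemma mem_gridsF_rows {m k : ℕ} {g : List (List Bool)} (h : g ∈ gridsF m k) :
    ∀ r ∈ g, r.length = m := by
  induction k generalizing g with
  | zero => simp [gridsF] at h; simp [h]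
  | succ k ih =>
    simp only [gridsF, Finset.mem_image, Finset.mem_filter, Finset.mem_product] at h
    obtain ⟨⟨s, g'⟩, ⟨⟨hs, hg'⟩, _⟩, rfl⟩ := h
    intro r hr
    rcases List.mem_cons.mp hr with rfl | hr
    · exact mem_rowsF_length hs
    · exact ih hg' r hr

lemma mem_gridsF_headI {m k : ℕ} {g : List (List Bool)} (hk : 1 ≤ k)
    (h : g ∈ gridsF m k) : g.headI ∈ rowsF m := by
  obtain ⟨k', rfl⟩ : ∃ k', k = k' + 1 := ⟨k - 1, by omega⟩
  simp only [gridsF, Finset.mem_image, Finset.mem_filter, Finset.mem_product] at h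
  obtain ⟨⟨s, g'⟩, ⟨⟨hs, _⟩, _⟩, rfl⟩ := h
  simpa using hs

lemma mem_gridsF_compat {m k : ℕ} {g : List (List Bool)} (h : g ∈ gridsF m k) :
    ∀ i, compatRow (g.getD (i+1) []) (g.getD i []) = true := by
  induction k generalizing g with
  | zero =>
    rw [show gridsF m 0 = {[]} from rfl, Finset.mem_singleton] at h
    subst h; intro i; rfl
  | succ k ih =>
    simp only [gridsF, Finset.mem_image, Finset.mem_filter, Finset.mem_product] at h
    obtain ⟨⟨s, g'⟩, ⟨⟨hs, hg'⟩, hc⟩, rfl⟩ := h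
    intro i
    cases i with
    | zero =>
      have he : g'.headI = g'.getD 0 [] := by cases g' <;> rfl
      rw [he] at hc
      simpa using hc
    | succ i => simpa using ih hg' i

noncomputable def TT (m k : ℕ) : ℝ := ∑ g ∈ gridsF m k, wRow g.headI

lemma TT_one (m : ℕ) (hm : 1 ≤ m) : TT m 1 = 2 * (17/10)^(m-1) := by
  unfold TT
  rw [show gridsF m 1 = gridsF m (0 + 1) from rfl, gridsF]
  rw [Finset.sum_image (by rintro ⟨a,b⟩ h ⟨c,d⟩ h' e; simpa using e)]
  have hfil : Finset.filter (fun p => compatRow p.2.headI p.1 = true)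
      ((rowsF m) ×ˢ gridsF m 0) = (rowsF m) ×ˢ gridsF m 0 := by
    apply Finset.filter_true_of_mem
    rintro ⟨s, g'⟩ hp
    have : g' ∈ gridsF m 0 := (Finset.mem_product.mp hp).2
    rw [show gridsF m 0 = {[]} from rfl, Finset.mem_singleton] at this
    subst this; rfl
  rw [hfil, Finset.sum_product, ← sum_wRow m hm]
  simp [show gridsF m 0 = {[]} from rfl]

lemma TT_succ (m k : ℕ) (hm : 1 ≤ m) (hk : 1 ≤ k) :
    (17/10)^(m-1) * TT m k ≤ TT m (k+1) := by
  unfold TT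
  rw [gridsF]
  rw [Finset.sum_image (by rintro ⟨a,b⟩ h ⟨c,d⟩ h' e; simpa using e)]
  rw [Finset.sum_filter, Finset.sum_product_right]
  have key : ∀ g ∈ gridsF m k,
      (17/10)^(m-1) * wRow g.headI ≤
      ∑ s ∈ rowsF m, if compatRow g.headI s then wRow s else 0 := by
    intro g hg
    have hmem := mem_gridsF_headI hk hg
    have hlen := mem_rowsF_length hmem
    obtain ⟨a, t, hat⟩ : ∃ a t, g.headI = a :: t := by
      cases hh : g.headI with
      | nil => rw [hh] at hlen; simp at hlen; omega
      | cons a t => exact ⟨a, t, rfl⟩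
    have hst := ST_ge a t
    unfold ST at hst
    have hlm : (a::t).length = m := by rw [← hat]; exact hlen
    rw [hlm] at hst
    rw [hat]
    exact hst
  calc (17/10)^(m-1) * ∑ g ∈ gridsF m k, wRow g.headI
      = ∑ g ∈ gridsF m k, (17/10)^(m-1) * wRow g.headI := by rw [Finset.mul_sum]
    _ ≤ ∑ g ∈ gridsF m k, ∑ s ∈ rowsF m, (if compatRow g.headI s then wRow s else 0) :=
        Finset.sum_le_sum key
    _ = _ := by
        apply Finset.sum_congr rfl
        intro g _
        apply Finset.sum_congr rfl
        intro s _
        rfl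

lemma TT_ge (m : ℕ) (hm : 1 ≤ m) : ∀ k, 1 ≤ k → 2 * ((17:ℝ)/10)^((m-1)*k) ≤ TT m k := by
  intro k
  induction k with
  | zero => omega
  | succ k ih =>
    intro _
    rcases Nat.lt_or_ge k 1 with h | h
    · have : k = 0 := by omega
      subst this
      rw [TT_one m hm]
      norm_num
    · have h1 := TT_succ m k hm h
      have h2 := ih h
      have hp : (0:ℝ) < (17/10)^(m-1) := by positivity
      calc (2:ℝ) * (17/10)^((m-1)*(k+1)) = (17/10)^(m-1) * (2 * (17/10)^((m-1)*k)) := by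
            rw [Nat.mul_succ, pow_add]; ring
        _ ≤ (17/10)^(m-1) * TT m k := by nlinarith
        _ ≤ TT m (k+1) := h1

lemma card_gridsF_ge (m k : ℕ) (hm : 1 ≤ m) (hk : 1 ≤ k) :
    2 * ((17:ℝ)/10)^((m-1)*k) ≤ ((gridsF m k).card : ℝ) := by
  refine le_trans (TT_ge m hm k hk) ?_
  unfold TT
  calc ∑ g ∈ gridsF m k, wRow g.headI ≤ ∑ g ∈ gridsF m k, 1 :=
        Finset.sum_le_sum (fun g _ => wRow_le_one _)
    _ = ((gridsF m k).card : ℝ) := by simp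

end MSAP

namespace MSAP

def cellB (g : List (List Bool)) (i j : ℕ) : Bool := (g.getD i []).getD j false

def psiB (g : List (List Bool)) (i j : ℕ) : Bool :=
  match i, j with
  | i'+1, j'+1 => cellB g i' j'
  | _, _ => false

def DB {n : ℕ} (g : List (List Bool)) (u v : Fin n × Fin n) : Bool :=
  if u.1 = v.1 then
    psiB g u.1.val (min u.2.val v.2.val + 1) != psiB g (u.1.val+1) (min u.2.val v.2.val + 1)
  else
    psiB g (min u.1.val v.1.val + 1) (min u.2.val v.2.val)
      != psiB g (min u.1.val v.1.val + 1) (min u.2.val v.2.val + 1)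

lemma DB_symm {n : ℕ} (g : List (List Bool)) (u v : Fin n × Fin n) :
    DB g u v = DB g v u := by
  unfold DB
  by_cases h : u.1 = v.1
  · rw [if_pos h, if_pos h.symm, h, min_comm]
  · rw [if_neg h, if_neg (fun e => h e.symm), min_comm u.1.val, min_comm u.2.val]

def PgB {n : ℕ} (g : List (List Bool)) : Sym2 (Fin n × Fin n) → Bool :=
  Sym2.lift ⟨DB g, DB_symm g⟩

def Phi (n : ℕ) (g : List (List Bool)) : Finset (Sym2 (Fin n × Fin n)) :=
  (gridGraph n n).edgeFinset.filter (fun e => PgB g e = true)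

lemma card_filter_incidence {V : Type*} [Fintype V] [DecidableEq V]
    (G : SimpleGraph V) [DecidableRel G.Adj] (P : Sym2 V → Bool) (v : V) :
    ((G.edgeFinset.filter (fun e => P e = true)).filter (fun e => v ∈ e)).card
      = ((G.neighborFinset v).filter (fun w => P s(v, w) = true)).card := by
  symm
  apply Finset.card_bij (fun w _ => s(v, w))
  · intro w hw
    simp only [Finset.mem_filter, SimpleGraph.mem_neighborFinset] at hw
    simp only [Finset.mem_filter, SimpleGraph.mem_edgeFinset, SimpleGraph.mem_edgeSet]
    exact ⟨⟨hw.1, hw.2⟩, Sym2.mem_mk_left _ _⟩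
  · intro w hw w' hw' he
    exact (Sym2.congr_right.mp he)
  · intro e he
    simp only [Finset.mem_filter, SimpleGraph.mem_edgeFinset, SimpleGraph.mem_edgeSet] at he
    obtain ⟨⟨hadj, hP⟩, hv⟩ := he
    refine ⟨Sym2.Mem.other' hv, ?_, (Sym2.other_spec' hv)⟩
    simp only [Finset.mem_filter, SimpleGraph.mem_neighborFinset]
    rw [Sym2.other_spec' hv]
    constructor
    · rw [← SimpleGraph.mem_edgeSet, Sym2.other_spec' hv]; exact hadj
    · exact hP

end MSAP

namespace MSAP

lemma cellB_oob_row {g : List (List Bool)} {i : ℕ} (j : ℕ) (h : g.length ≤ i) :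
    cellB g i j = false := by
  unfold cellB
  have : g.getD i [] = [] := List.getD_eq_default _ _ h
  rw [this]
  rfl

lemma cellB_oob_col {g : List (List Bool)} {L : ℕ} (i : ℕ) {j : ℕ}
    (hr : ∀ r ∈ g, r.length ≤ L) (h : L ≤ j) : cellB g i j = false := by
  unfold cellB
  apply List.getD_eq_default
  by_cases hi : i < g.length
  · have hmem : g.getD i [] ∈ g := by
      rw [List.getD_eq_getElem _ _ hi]
      exact List.getElem_mem hi
    exact le_trans (hr _ hmem) h
  · have : g.getD i [] = [] := List.getD_eq_default _ _ (by omega)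
    rw [this]
    simp

lemma psiB_zero_row {g : List (List Bool)} (j : ℕ) : psiB g 0 j = false := by
  unfold psiB; cases j <;> rfl

lemma psiB_zero_col {g : List (List Bool)} (i : ℕ) : psiB g i 0 = false := by
  unfold psiB; cases i <;> rfl

lemma psiB_oob_row {g : List (List Bool)} {n i : ℕ} (j : ℕ)
    (hg : g.length ≤ n - 1) (h : n ≤ i) (hn : 1 ≤ n) : psiB g i j = false := by
  unfold psiB
  match i, j with
  | 0, _ => rfl
  | i'+1, 0 => rfl
  | i'+1, j'+1 => exact cellB_oob_row j' (by omega)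

lemma psiB_oob_col {g : List (List Bool)} {n : ℕ} (i : ℕ) {j : ℕ}
    (hr : ∀ r ∈ g, r.length ≤ n - 1) (h : n ≤ j) (hn : 1 ≤ n) : psiB g i j = false := by
  unfold psiB
  match i, j with
  | 0, _ => rfl
  | i'+1, 0 => rfl
  | i'+1, j'+1 => exact cellB_oob_col i' hr (by omega)

lemma neighbor_filter_card (n : ℕ) (hn : 3 ≤ n) (g : List (List Bool))
    (hg : g.length ≤ n - 1) (hr : ∀ r ∈ g, r.length ≤ n - 1) (p q : Fin n) :
    (Finset.univ.filter (fun w : Fin n × Fin n =>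
        (gridGraph n n).Adj (p,q) w ∧ DB g (p,q) w = true)).card
    = (if (psiB g p.val q.val != psiB g p.val (q.val+1)) = true then 1 else 0)
      + (if (psiB g p.val q.val != psiB g (p.val+1) q.val) = true then 1 else 0)
      + (if (psiB g p.val (q.val+1) != psiB g (p.val+1) (q.val+1)) = true then 1 else 0)
      + (if (psiB g (p.val+1) q.val != psiB g (p.val+1) (q.val+1)) = true then 1 else 0) := by
  have hin : p.val < n := p.isLt
  have hjn : q.val < n := q.isLt
  set i := p.val with hi
  set j := q.val with hj
  set Pred : Fin n × Fin n → Prop :=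
    fun w => (gridGraph n n).Adj (p,q) w ∧ DB g (p,q) w = true with hPred
  set S4 := Finset.univ.filter (fun w : Fin n × Fin n => Pred w ∧ w.2 = q ∧ w.1.val + 1 = i) with hS4
  set S2 := Finset.univ.filter (fun w : Fin n × Fin n => Pred w ∧ w.1 = p ∧ w.2.val + 1 = j) with hS2
  set S1 := Finset.univ.filter (fun w : Fin n × Fin n => Pred w ∧ w.1 = p ∧ w.2.val = j + 1) with hS1
  set S3 := Finset.univ.filter (fun w : Fin n × Fin n => Pred w ∧ w.2 = q ∧ w.1.val = i + 1) with hS3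
  have hsplit : Finset.univ.filter Pred = (S4 ∪ S2) ∪ (S1 ∪ S3) := by
    ext w
    simp only [hS1, hS2, hS3, hS4, Finset.mem_union, Finset.mem_filter, Finset.mem_univ,
      true_and]
    constructor
    · intro hw
      have hadj : gridAdj n n (p,q) w := hw.1
      unfold gridAdj at hadj
      dsimp only at hadj
      rcases hadj with ⟨h1, h2 | h2⟩ | ⟨h1, h2 | h2⟩
      · right; left; exact ⟨hw, h1.symm, by omega⟩
      · left; right; exact ⟨hw, h1.symm, by omega⟩
      · right; right
        refine ⟨hw, h1.symm, ?_⟩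
        omega
      · left; left
        refine ⟨hw, h1.symm, ?_⟩
        omega
    · rintro ((⟨hw,_,_⟩|⟨hw,_,_⟩)|(⟨hw,_,_⟩|⟨hw,_,_⟩)) <;> exact hw
  -- S1 : right neighbor (p, j+1) : indicator b != d
  have hc1 : S1.card = (if (psiB g i (j+1) != psiB g (i+1) (j+1)) = true then 1 else 0) := by
    by_cases hj1 : j + 1 < n
    · have hDBeq : DB g (p,q) (p, (⟨j+1, hj1⟩ : Fin n)) = (psiB g i (j+1) != psiB g (i+1) (j+1)) := by
        unfold DB
        rw [if_pos rfl]
        dsimp only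
        rw [← hj, min_eq_left (by omega)]
      have hSeq : S1 = if (psiB g i (j+1) != psiB g (i+1) (j+1)) = true
          then {((p, ⟨j+1, hj1⟩) : Fin n × Fin n)} else ∅ := by
        ext w
        simp only [hS1, Finset.mem_filter, Finset.mem_univ, true_and, hPred]
        constructor
        · rintro ⟨⟨hadj, hDB⟩, h1, h2⟩
          have hw : w = (p, ⟨j+1, hj1⟩) := by
            apply Prod.ext
            · exact h1
            · apply Fin.ext; exact h2
          rw [hw] at hDB
          rw [hDBeq] at hDB
          rw [if_pos hDB]
          simp [hw]
        · intro hw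
          by_cases hD : (psiB g i (j+1) != psiB g (i+1) (j+1)) = true
          · rw [if_pos hD] at hw
            rw [Finset.mem_singleton] at hw
            subst hw
            refine ⟨⟨?_, hDBeq.trans hD⟩, rfl, rfl⟩
            show gridAdj n n (p,q) _
            left
            exact ⟨rfl, Or.inl (by simp [← hj])⟩
          · rw [if_neg hD] at hw
            exact absurd hw (Finset.notMem_empty w)
      rw [hSeq]
      split <;> simp
    · have hb : psiB g i (j+1) = false := psiB_oob_col _ hr (by omega) (by omega)
      have hd : psiB g (i+1) (j+1) = false := psiB_oob_col _ hr (by omega) (by omega)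
      rw [hb, hd]
      have hSeq : S1 = ∅ := by
        rw [Finset.eq_empty_iff_forall_notMem]
        rintro w hw
        simp only [hS1, Finset.mem_filter] at hw
        have := w.2.isLt
        omega
      rw [hSeq]
      simp
  -- S2 : left neighbor (p, j-1) : indicator a != c
  have hc2 : S2.card = (if (psiB g i j != psiB g (i+1) j) = true then 1 else 0) := by
    by_cases hj0 : 0 < j
    · have hj1 : j - 1 < n := by omega
      have hDBeq : DB g (p,q) (p, (⟨j-1, hj1⟩ : Fin n)) = (psiB g i j != psiB g (i+1) j) := by
        unfold DB
        rw [if_pos rfl]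
        dsimp only
        rw [← hj, min_eq_right (by omega)]
        have : j - 1 + 1 = j := by omega
        rw [this]
      have hSeq : S2 = if (psiB g i j != psiB g (i+1) j) = true
          then {((p, ⟨j-1, hj1⟩) : Fin n × Fin n)} else ∅ := by
        ext w
        simp only [hS2, Finset.mem_filter, Finset.mem_univ, true_and, hPred]
        constructor
        · rintro ⟨⟨hadj, hDB⟩, h1, h2⟩
          have hw : w = (p, ⟨j-1, hj1⟩) := by
            apply Prod.ext
            · exact h1
            · apply Fin.ext; dsimp only <;> omega
          rw [hw] at hDB
          rw [hDBeq] at hDB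
          rw [if_pos hDB]
          simp [hw]
        · intro hw
          by_cases hD : (psiB g i j != psiB g (i+1) j) = true
          · rw [if_pos hD] at hw
            rw [Finset.mem_singleton] at hw
            subst hw
            refine ⟨⟨?_, hDBeq.trans hD⟩, rfl, by dsimp only <;> omega⟩
            show gridAdj n n (p,q) _
            left
            refine ⟨rfl, Or.inr ?_⟩
            dsimp only
            omega
          · rw [if_neg hD] at hw
            exact absurd hw (Finset.notMem_empty w)
      rw [hSeq]
      split <;> simp
    · have hj0' : j = 0 := by omega
      rw [hj0', psiB_zero_col, psiB_zero_col]
      have hSeq : S2 = ∅ := by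
        rw [Finset.eq_empty_iff_forall_notMem]
        rintro w hw
        simp only [hS2, Finset.mem_filter] at hw
        omega
      rw [hSeq]
      simp
  -- S3 : lower neighbor (i+1, q) : indicator c != d
  have hc3 : S3.card = (if (psiB g (i+1) j != psiB g (i+1) (j+1)) = true then 1 else 0) := by
    by_cases hi1 : i + 1 < n
    · have hfne : p ≠ (⟨i+1, hi1⟩ : Fin n) := by
        intro h
        have hv : p.val = i + 1 := by rw [h]
        omega
      have hDBeq : DB g (p,q) ((⟨i+1, hi1⟩ : Fin n), q) = (psiB g (i+1) j != psiB g (i+1) (j+1)) := by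
        unfold DB
        rw [if_neg hfne]
        dsimp only
        rw [← hi, ← hj, min_eq_left (by omega), min_self]
      have hSeq : S3 = if (psiB g (i+1) j != psiB g (i+1) (j+1)) = true
          then {(((⟨i+1, hi1⟩ : Fin n), q) : Fin n × Fin n)} else ∅ := by
        ext w
        simp only [hS3, Finset.mem_filter, Finset.mem_univ, true_and, hPred]
        constructor
        · rintro ⟨⟨hadj, hDB⟩, h1, h2⟩
          have hw : w = (⟨i+1, hi1⟩, q) := by
            apply Prod.ext
            · apply Fin.ext; exact h2
            · exact h1
          rw [hw] at hDB
          rw [hDBeq] at hDB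
          rw [if_pos hDB]
          simp [hw]
        · intro hw
          by_cases hD : (psiB g (i+1) j != psiB g (i+1) (j+1)) = true
          · rw [if_pos hD] at hw
            rw [Finset.mem_singleton] at hw
            subst hw
            refine ⟨⟨?_, hDBeq.trans hD⟩, rfl, rfl⟩
            show gridAdj n n (p,q) _
            right
            exact ⟨rfl, Or.inl (by dsimp only <;> omega)⟩
          · rw [if_neg hD] at hw
            exact absurd hw (Finset.notMem_empty w)
      rw [hSeq]
      split <;> simp
    · have hb : psiB g (i+1) j = false := psiB_oob_row _ hg (by omega) (by omega)
      have hd : psiB g (i+1) (j+1) = false := psiB_oob_row _ hg (by omega) (by omega)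
      rw [hb, hd]
      have hSeq : S3 = ∅ := by
        rw [Finset.eq_empty_iff_forall_notMem]
        rintro w hw
        simp only [hS3, Finset.mem_filter] at hw
        have := w.1.isLt
        omega
      rw [hSeq]
      simp
  -- S4 : upper neighbor (i-1, q) : indicator a != b
  have hc4 : S4.card = (if (psiB g i j != psiB g i (j+1)) = true then 1 else 0) := by
    by_cases hi0 : 0 < i
    · have hi1 : i - 1 < n := by omega
      have hfne : p ≠ (⟨i-1, hi1⟩ : Fin n) := by
        intro h
        have hv : p.val = i - 1 := by rw [h]
        omega
      have hDBeq : DB g (p,q) ((⟨i-1, hi1⟩ : Fin n), q) = (psiB g i j != psiB g i (j+1)) := by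
        unfold DB
        rw [if_neg hfne]
        dsimp only
        rw [← hi, ← hj, min_eq_right (by omega), min_self]
        have : i - 1 + 1 = i := by omega
        rw [this]
      have hSeq : S4 = if (psiB g i j != psiB g i (j+1)) = true
          then {((((⟨i-1, hi1⟩ : Fin n), q)) : Fin n × Fin n)} else ∅ := by
        ext w
        simp only [hS4, Finset.mem_filter, Finset.mem_univ, true_and, hPred]
        constructor
        · rintro ⟨⟨hadj, hDB⟩, h1, h2⟩
          have hw : w = (⟨i-1, hi1⟩, q) := by
            apply Prod.ext
            · apply Fin.ext; dsimp only <;> omega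
            · exact h1
          rw [hw] at hDB
          rw [hDBeq] at hDB
          rw [if_pos hDB]
          simp [hw]
        · intro hw
          by_cases hD : (psiB g i j != psiB g i (j+1)) = true
          · rw [if_pos hD] at hw
            rw [Finset.mem_singleton] at hw
            subst hw
            refine ⟨⟨?_, hDBeq.trans hD⟩, rfl, by dsimp only <;> omega⟩
            show gridAdj n n (p,q) _
            right
            refine ⟨rfl, Or.inr ?_⟩
            dsimp only
            omega
          · rw [if_neg hD] at hw
            exact absurd hw (Finset.notMem_empty w)
      rw [hSeq]
      split <;> simp
    · have hi0' : i = 0 := by omega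
      rw [hi0', psiB_zero_row, psiB_zero_row]
      have hSeq : S4 = ∅ := by
        rw [Finset.eq_empty_iff_forall_notMem]
        rintro w hw
        simp only [hS4, Finset.mem_filter] at hw
        omega
      rw [hSeq]
      simp
  -- disjointness
  have hd42 : Disjoint S4 S2 := by
    rw [Finset.disjoint_left]
    rintro w hw hw'
    simp only [hS4, hS2, Finset.mem_filter, Finset.mem_univ, true_and] at hw hw'
    obtain ⟨-, -, h4⟩ := hw
    obtain ⟨-, h2a, -⟩ := hw'
    have hv : w.1.val = p.val := congrArg Fin.val h2a
    omega
  have hd13 : Disjoint S1 S3 := by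
    rw [Finset.disjoint_left]
    rintro w hw hw'
    simp only [hS1, hS3, Finset.mem_filter, Finset.mem_univ, true_and] at hw hw'
    obtain ⟨-, h1a, -⟩ := hw
    obtain ⟨-, -, h3⟩ := hw'
    have hv : w.1.val = p.val := congrArg Fin.val h1a
    omega
  have hdOut : Disjoint (S4 ∪ S2) (S1 ∪ S3) := by
    rw [Finset.disjoint_left]
    rintro w hw hw'
    simp only [Finset.mem_union, hS1, hS2, hS3, hS4, Finset.mem_filter,
      Finset.mem_univ, true_and] at hw hw'
    rcases hw with ⟨-, hq4, h4⟩ | ⟨-, hp2, h2⟩ <;>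
      rcases hw' with ⟨-, hp1, h1⟩ | ⟨-, hq3, h3⟩
    · have hv : w.2.val = q.val := congrArg Fin.val hq4
      omega
    · omega
    · omega
    · have hv : w.1.val = p.val := congrArg Fin.val hp2
      omega
  rw [hsplit, Finset.card_union_of_disjoint hdOut, Finset.card_union_of_disjoint hd42,
    Finset.card_union_of_disjoint hd13, hc1, hc2, hc3, hc4]
  omega

end MSAP

namespace MSAP

lemma okB_swap (a b x y : Bool) : okB a b x y = okB x y a b := by
  revert a b x y; decide

lemma compat_getD : ∀ (r s : List Bool), compatRow r s = true → r.length = s.length →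
    ∀ j, okB (r.getD j false) (r.getD (j+1) false)
      (s.getD j false) (s.getD (j+1) false) = true := by
  intro r
  induction r with
  | nil =>
    intro s _ hl j
    have : s = [] := by
      cases s with
      | nil => rfl
      | cons x s' => simp at hl
    subst this
    rfl
  | cons a r' ih =>
    intro s hc hl j
    cases s with
    | nil => simp at hl
    | cons x s' =>
      cases r' with
      | nil =>
        have : s' = [] := by
          cases s' with
          | nil => rfl
          | cons y s'' => simp at hl
        subst this
        match j with
        | 0 => cases a <;> cases x <;> rfl
        | j+1 =>
          have h1 : List.getD [a] (j+1) false = false := by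
            rw [List.getD_cons_succ]; rfl
          have h2 : List.getD [a] (j+1+1) false = false := by
            rw [List.getD_cons_succ]; rfl
          have h3 : List.getD [x] (j+1) false = false := by
            rw [List.getD_cons_succ]; rfl
          have h4 : List.getD [x] (j+1+1) false = false := by
            rw [List.getD_cons_succ]; rfl
          rw [h1, h2, h3, h4]
          rfl
      | cons b r'' =>
        cases s' with
        | nil => simp at hl
        | cons y s'' =>
          rw [show compatRow (a::b::r'') (x::y::s'')
              = (okB a b x y && compatRow (b::r'') (y::s'')) from rfl,
            Bool.and_eq_true] at hc
          match j with
          | 0 => exact hc.1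
          | j+1 =>
            have := ih (y::s'') hc.2 (by simpa using hl) j
            simpa using this
end MSAP

namespace MSAP

lemma compat_self : ∀ (r : List Bool), compatRow r r = true
  | [] => rfl
  | [_] => rfl
  | a :: b :: r => by
      rw [show compatRow (a::b::r) (a::b::r)
          = (okB a b a b && compatRow (b::r) (b::r)) from rfl, Bool.and_eq_true]
      exact ⟨by cases a <;> cases b <;> rfl, compat_self (b::r)⟩

lemma cell_avoid {m k : ℕ} {g : List (List Bool)} (hg : g ∈ gridsF m k) (i j : ℕ) :
    okB (cellB g i j) (cellB g i (j+1)) (cellB g (i+1) j) (cellB g (i+1) (j+1)) = true := by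
  by_cases hi : i + 1 < g.length
  · have hr1 : g.getD i [] ∈ g := by
      rw [List.getD_eq_getElem _ _ (by omega)]
      exact List.getElem_mem _
    have hr2 : g.getD (i+1) [] ∈ g := by
      rw [List.getD_eq_getElem _ _ hi]
      exact List.getElem_mem _
    have hl : (g.getD (i+1) []).length = (g.getD i []).length := by
      rw [mem_gridsF_rows hg _ hr1, mem_gridsF_rows hg _ hr2]
    have hco := mem_gridsF_compat hg i
    have := compat_getD _ _ hco hl j
    rw [okB_swap]
    exact this
  · have h1 : cellB g (i+1) j = false := cellB_oob_row _ (by omega)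
    have h2 : cellB g (i+1) (j+1) = false := cellB_oob_row _ (by omega)
    rw [h1, h2]
    cases (cellB g i j) <;> cases (cellB g i (j+1)) <;> rfl

lemma psiB_avoid {m k : ℕ} {g : List (List Bool)} (hg : g ∈ gridsF m k) (i j : ℕ) :
    okB (psiB g i j) (psiB g i (j+1)) (psiB g (i+1) j) (psiB g (i+1) (j+1)) = true := by
  match i, j with
  | 0, j =>
    rw [psiB_zero_row, psiB_zero_row]
    cases (psiB g 1 j) <;> cases (psiB g 1 (j+1)) <;> rfl
  | i'+1, 0 =>
    rw [psiB_zero_col, psiB_zero_col]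
    cases (psiB g (i'+1) 1) <;> cases (psiB g (i'+2) 1) <;> rfl
  | i'+1, j'+1 =>
    exact cell_avoid hg i' j'

lemma okB_count (a b c d : Bool) (h : okB a b c d = true) :
    ((if (a != b) = true then 1 else 0) + (if (a != c) = true then 1 else 0)
      + (if (b != d) = true then 1 else 0) + (if (c != d) = true then 1 else 0) = 0)
    ∨ ((if (a != b) = true then 1 else 0) + (if (a != c) = true then 1 else 0)
      + (if (b != d) = true then 1 else 0) + (if (c != d) = true then 1 else 0) = 2) := by
  revert h
  cases a <;> cases b <;> cases c <;> cases d <;> decide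

lemma Phi_degree (n : ℕ) (hn : 3 ≤ n) (g : List (List Bool))
    (hg : g ∈ gridsF (n-1) (n-1)) (v : Fin n × Fin n) :
    ((Phi n g).filter (fun e => v ∈ e)).card = 0 ∨
    ((Phi n g).filter (fun e => v ∈ e)).card = 2 := by
  obtain ⟨p, q⟩ := v
  have hglen : g.length ≤ n - 1 := le_of_eq (mem_gridsF_length hg)
  have hrows : ∀ r ∈ g, r.length ≤ n - 1 :=
    fun r hr => le_of_eq (mem_gridsF_rows hg r hr)
  have hkey : ((Phi n g).filter (fun e => (p,q) ∈ e)).card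
      = (if (psiB g p.val q.val != psiB g p.val (q.val+1)) = true then 1 else 0)
      + (if (psiB g p.val q.val != psiB g (p.val+1) q.val) = true then 1 else 0)
      + (if (psiB g p.val (q.val+1) != psiB g (p.val+1) (q.val+1)) = true then 1 else 0)
      + (if (psiB g (p.val+1) q.val != psiB g (p.val+1) (q.val+1)) = true then 1 else 0) := by
    rw [Phi, card_filter_incidence]
    rw [SimpleGraph.neighborFinset_eq_filter]
    rw [Finset.filter_filter]
    exact neighbor_filter_card n hn g hglen hrows p q
  rw [hkey]
  exact okB_count _ _ _ _ (psiB_avoid hg p.val q.val)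

lemma cellB_true_lt {g : List (List Bool)} {i j : ℕ} (h : cellB g i j = true) :
    i < g.length ∧ j < (g.getD i []).length := by
  constructor
  · by_contra hc
    rw [cellB_oob_row j (by omega)] at h
    exact Bool.false_ne_true h
  · by_contra hc
    unfold cellB at h
    rw [List.getD_eq_default _ _ (by omega)] at h
    exact Bool.false_ne_true h

lemma Phi_mem_nonempty (n : ℕ) (hn : 3 ≤ n) (g : List (List Bool))
    (hg : g ∈ gridsF (n-1) (n-1)) :
    ∀ i, (∃ j, cellB g i j = true) → (Phi n g).Nonempty := by
  intro i
  induction i using Nat.strong_induction_on with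
  | _ i IH =>
  intro ⟨j, hij⟩
  by_cases hup : ∃ i' < i, ∃ j', cellB g i' j' = true
  · obtain ⟨i', hi', j', hj'⟩ := hup
    exact IH i' hi' ⟨j', hj'⟩
  · push_neg at hup
    -- all rows above i are zero; construct the edge above cell (i,j)
    have hlt := cellB_true_lt hij
    have hglen : g.length ≤ n - 1 := le_of_eq (mem_gridsF_length hg)
    have hrlen : (g.getD i []).length ≤ n - 1 := by
      have : g.getD i [] ∈ g := by
        rw [List.getD_eq_getElem _ _ hlt.1]
        exact List.getElem_mem _
      exact le_of_eq (mem_gridsF_rows hg _ this)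
    have hiv : i < n := by omega
    have hjv : j < n := by omega
    have hj1v : j + 1 < n := by omega
    set u : Fin n × Fin n := (⟨i, hiv⟩, ⟨j, hjv⟩) with hu
    set w : Fin n × Fin n := (⟨i, hiv⟩, ⟨j+1, hj1v⟩) with hw
    have hadj : (gridGraph n n).Adj u w := by
      show gridAdj n n u w
      left
      exact ⟨rfl, Or.inl rfl⟩
    have hDB : DB g u w = true := by
      unfold DB
      rw [if_pos rfl]
      dsimp only [u, w]
      rw [min_eq_left (by omega)]
      have h2 : psiB g (i+1) (j+1) = true := hij
      have h1 : psiB g i (j+1) = false := by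
        match i, hij with
        | 0, _ => rfl
        | i'+1, hij =>
          show cellB g i' j = false
          by_contra hc
          exact absurd (hup i' (by omega) j) (by simpa using hc)
      rw [h1, h2]
      rfl
    refine ⟨s(u, w), ?_⟩
    rw [Phi, Finset.mem_filter]
    constructor
    · rw [SimpleGraph.mem_edgeFinset]
      exact hadj
    · exact hDB

def zg (m k : ℕ) : List (List Bool) := List.replicate k (List.replicate m false)

lemma zg_mem (m : ℕ) : ∀ k, zg m k ∈ gridsF m k := by
  intro k
  induction k with
  | zero => simp [zg, gridsF]
  | succ k ih =>
    rw [show zg m (k+1) = (List.replicate m false) :: zg m k by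
      simp [zg, List.replicate_succ]]
    simp only [gridsF, Finset.mem_image]
    refine ⟨(List.replicate m false, zg m k), ?_, rfl⟩
    rw [Finset.mem_filter, Finset.mem_product]
    refine ⟨⟨mem_rowsF_of_length (by simp), ih⟩, ?_⟩
    show compatRow (zg m k).headI _ = true
    cases k with
    | zero => rfl
    | succ k' =>
      rw [show (zg m (k'+1)).headI = List.replicate m false by
        simp [zg, List.replicate_succ]]
      exact compat_self _

lemma eq_zg_of_all_false {m k : ℕ} {g : List (List Bool)} (hg : g ∈ gridsF m k)
    (h : ∀ i j, cellB g i j = false) : g = zg m k := by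
  apply List.ext_getElem
  · simp [zg, mem_gridsF_length hg]
  · intro i h1 h2
    have hrow : g[i] ∈ g := List.getElem_mem _
    have hrl : g[i].length = m := mem_gridsF_rows hg _ hrow
    rw [show (zg m k)[i] = List.replicate m false by simp [zg]]
    apply List.ext_getElem
    · simp [hrl]
    · intro j hj1 hj2
      have := h i j
      unfold cellB at this
      rw [List.getD_eq_getElem _ _ h1, List.getD_eq_getElem _ _ (by omega)] at this
      rw [this]
      symm
      simp

lemma bne_left_cancel {c x y : Bool} (h : (c != x) = (c != y)) : x = y := by
  revert h; cases c <;> cases x <;> cases y <;> decide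

lemma Phi_inj (n : ℕ) (hn : 3 ≤ n) {g g' : List (List Bool)}
    (hg : g ∈ gridsF (n-1) (n-1)) (hg' : g' ∈ gridsF (n-1) (n-1))
    (h : Phi n g = Phi n g') : g = g' := by
  have hglen := mem_gridsF_length hg
  have hglen' := mem_gridsF_length hg'
  have hcell : ∀ i j, cellB g i j = cellB g' i j := by
    intro i
    induction i using Nat.strong_induction_on with
    | _ i IH =>
    intro j
    by_cases hin : i < n - 1 ∧ j < n - 1
    · obtain ⟨hi, hj⟩ := hin
      have hiv : i < n := by omega
      have hjv : j < n := by omega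
      have hj1v : j + 1 < n := by omega
      set u : Fin n × Fin n := (⟨i, hiv⟩, ⟨j, hjv⟩) with hu
      set w : Fin n × Fin n := (⟨i, hiv⟩, ⟨j+1, hj1v⟩) with hw
      have hadj : (gridGraph n n).Adj u w := by
        show gridAdj n n u w
        left
        exact ⟨rfl, Or.inl rfl⟩
      have hmem : ∀ gg : List (List Bool),
          (s(u,w) ∈ Phi n gg) ↔ (DB gg u w = true) := by
        intro gg
        rw [Phi, Finset.mem_filter, SimpleGraph.mem_edgeFinset]
        exact ⟨fun hh => hh.2, fun hh => ⟨hadj, hh⟩⟩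
      have hDBeq : (DB g u w = true) ↔ (DB g' u w = true) := by
        rw [← hmem, ← hmem, h]
      have hDBeq' : DB g u w = DB g' u w := by
        rcases Bool.dichotomy (DB g u w) with h1 | h1 <;>
          rcases Bool.dichotomy (DB g' u w) with h2 | h2 <;>
          simp_all
      unfold DB at hDBeq'
      rw [if_pos rfl, if_pos rfl] at hDBeq'
      dsimp only [u, w] at hDBeq'
      rw [min_eq_left (by omega)] at hDBeq'
      -- psiB g i (j+1) != psiB g (i+1) (j+1) = same for g'
      have hpsi : psiB g i (j+1) = psiB g' i (j+1) := by
        match i with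
        | 0 => rfl
        | i'+1 =>
          show cellB g i' j = cellB g' i' j
          exact IH i' (by omega) j
      rw [hpsi] at hDBeq'
      exact bne_left_cancel hDBeq'
    · push_neg at hin
      by_cases hi : i < n - 1
      · have hj : n - 1 ≤ j := hin hi
        rw [cellB_oob_col i (fun r hr => le_of_eq (mem_gridsF_rows hg r hr)) hj,
          cellB_oob_col i (fun r hr => le_of_eq (mem_gridsF_rows hg' r hr)) hj]
      · rw [cellB_oob_row j (by omega), cellB_oob_row j (by omega)]
  -- conclude lists equal
  apply List.ext_getElem
  · rw [hglen, hglen']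
  · intro i h1 h2
    apply List.ext_getElem
    · rw [mem_gridsF_rows hg _ (List.getElem_mem _),
        mem_gridsF_rows hg' _ (List.getElem_mem _)]
    · intro j hj1 hj2
      have := hcell i j
      unfold cellB at this
      rw [List.getD_eq_getElem _ _ h1, List.getD_eq_getElem _ _ h2,
        List.getD_eq_getElem _ _ hj1, List.getD_eq_getElem _ _ hj2] at this
      exact this

end MSAP

namespace MSAP

theorem msap_lower (n : ℕ) (hn : 3 ≤ n) :
    ((17:ℝ)/10) ^ ((n-2)^2) ≤ (msapCount n n : ℝ) := by
  have hM2 : 2 ≤ n - 1 := by omega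
  set M := n - 1 with hM
  have hmaps : ∀ g ∈ (gridsF M M).erase (zg M M), Phi n g ∈ msapFinset n n := by
    intro g hgE
    rw [Finset.mem_erase] at hgE
    obtain ⟨hgne, hg⟩ := hgE
    rw [msapFinset, Finset.mem_filter]
    refine ⟨Finset.mem_powerset.mpr (Finset.filter_subset _ _), ?_, ?_⟩
    · have hex : ∃ i j, cellB g i j = true := by
        by_contra hall
        push_neg at hall
        refine hgne (eq_zg_of_all_false hg (fun i j => ?_))
        exact Bool.eq_false_iff.mpr (hall i j)
      obtain ⟨i, j, hij⟩ := hex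
      have hne := Phi_mem_nonempty n hn g hg i ⟨j, hij⟩
      exact Finset.nonempty_iff_ne_empty.mp hne
    · intro v
      exact Phi_degree n hn g hg v
  have hinj : Set.InjOn (Phi n) ((gridsF M M).erase (zg M M)) := by
    intro g hgE g' hgE' hPhi
    rw [Finset.coe_erase, Set.mem_diff] at hgE hgE'
    exact Phi_inj n hn (by exact_mod_cast hgE.1) (by exact_mod_cast hgE'.1) hPhi
  have hcard : ((gridsF M M).erase (zg M M)).card ≤ (msapFinset n n).card :=
    Finset.card_le_card_of_injOn (Phi n) hmaps hinj
  rw [Finset.card_erase_of_mem (zg_mem M M)] at hcard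
  have hpos : 1 ≤ (gridsF M M).card := Finset.card_pos.mpr ⟨zg M M, zg_mem M M⟩
  have h1 : 2 * ((17:ℝ)/10)^((M-1)*M) ≤ ((gridsF M M).card : ℝ) :=
    card_gridsF_ge M M (by omega) (by omega)
  have h2 : ((17:ℝ)/10)^((n-2)^2) ≤ ((17:ℝ)/10)^((M-1)*M) := by
    apply pow_le_pow_right₀ (by norm_num)
    have : n - 2 = M - 1 := by omega
    rw [this]
    nlinarith [Nat.sub_le M 1]
  have h3 : (1:ℝ) ≤ ((17:ℝ)/10)^((M-1)*M) := one_le_pow₀ (by norm_num)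
  have hc : ((msapCount n n : ℕ) : ℝ) ≥ ((gridsF M M).card : ℝ) - 1 := by
    rw [msapCount]
    calc ((gridsF M M).card : ℝ) - 1
        = (((gridsF M M).card - 1 : ℕ) : ℝ) := by
          rw [Nat.cast_sub hpos]; norm_num
      _ ≤ ((msapFinset n n).card : ℝ) := by exact_mod_cast hcard
  calc ((17:ℝ)/10)^((n-2)^2) ≤ ((17:ℝ)/10)^((M-1)*M) := h2
    _ ≤ 2 * ((17:ℝ)/10)^((M-1)*M) - 1 := by linarith
    _ ≤ ((gridsF M M).card : ℝ) - 1 := by linarith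
    _ ≤ (msapCount n n : ℝ) := hc

end MSAP

namespace MSAP

lemma degree_le_four (n : ℕ) (hn : 1 ≤ n) (v : Fin n × Fin n) :
    (gridGraph n n).degree v ≤ 4 := by
  obtain ⟨p, q⟩ := v
  have hi := p.isLt
  have hj := q.isLt
  have h1 : min (q.val+1) (n-1) < n := by omega
  have h2 : q.val - 1 < n := by omega
  have h3 : min (p.val+1) (n-1) < n := by omega
  have h4 : p.val - 1 < n := by omega
  set c1 : Fin n × Fin n := (p, ⟨min (q.val+1) (n-1), h1⟩)
  set c2 : Fin n × Fin n := (p, ⟨q.val - 1, h2⟩)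
  set c3 : Fin n × Fin n := (⟨min (p.val+1) (n-1), h3⟩, q)
  set c4 : Fin n × Fin n := (⟨p.val - 1, h4⟩, q)
  have hsub : (gridGraph n n).neighborFinset (p,q) ⊆ {c1, c2, c3, c4} := by
    intro w hw
    rw [SimpleGraph.mem_neighborFinset] at hw
    have hadj : gridAdj n n (p,q) w := hw
    simp only [Finset.mem_insert, Finset.mem_singleton]
    rcases hadj with ⟨e1, e2 | e2⟩ | ⟨e1, e2 | e2⟩
    · left
      have := w.2.isLt
      refine Prod.ext e1.symm (Fin.ext ?_)
      dsimp only [c1] at e2 ⊢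
      omega
    · right; left
      refine Prod.ext e1.symm (Fin.ext ?_)
      dsimp only [c2] at e2 ⊢
      omega
    · right; right; left
      have := w.1.isLt
      refine Prod.ext (Fin.ext ?_) e1.symm
      dsimp only [c3] at e2 ⊢
      omega
    · right; right; right
      refine Prod.ext (Fin.ext ?_) e1.symm
      dsimp only [c4] at e2 ⊢
      omega
  calc (gridGraph n n).degree (p,q)
      = ((gridGraph n n).neighborFinset (p,q)).card := rfl
    _ ≤ ({c1, c2, c3, c4} : Finset (Fin n × Fin n)).card := Finset.card_le_card hsub
    _ ≤ ({c2, c3, c4} : Finset (Fin n × Fin n)).card + 1 := Finset.card_insert_le _ _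
    _ ≤ (({c3, c4} : Finset (Fin n × Fin n)).card + 1) + 1 := by
        have := Finset.card_insert_le c2 ({c3, c4} : Finset (Fin n × Fin n))
        omega
    _ ≤ 4 := by
        have := Finset.card_insert_le c3 ({c4} : Finset (Fin n × Fin n))
        have := Finset.card_singleton c4
        omega

lemma edge_card_le (n : ℕ) (hn : 1 ≤ n) :
    (gridGraph n n).edgeFinset.card ≤ 2 * n^2 := by
  have hsum := SimpleGraph.sum_degrees_eq_twice_card_edges (gridGraph n n)
  have hb : ∑ v : Fin n × Fin n, (gridGraph n n).degree v ≤ 4 * n^2 := by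
    calc ∑ v : Fin n × Fin n, (gridGraph n n).degree v
        ≤ ∑ _v : Fin n × Fin n, 4 :=
          Finset.sum_le_sum (fun v _ => degree_le_four n hn v)
      _ = n^2 * 4 := by
          rw [Finset.sum_const, smul_eq_mul]
          congr 1
          simp [pow_two]
      _ = 4 * n^2 := by ring
  omega

lemma msapCount_le (n : ℕ) (hn : 1 ≤ n) : msapCount n n ≤ 2^(2*n^2) := by
  have h1 : msapCount n n ≤ ((gridGraph n n).edgeFinset.powerset).card := by
    rw [msapCount, msapFinset]
    exact Finset.card_le_card (Finset.filter_subset _ _)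
  rw [Finset.card_powerset] at h1
  exact le_trans h1 (Nat.pow_le_pow_right (by norm_num) (edge_card_le n hn))


end MSAP

open Filter Topology in
theorem msap_liminf_aux :
    (∀ n : ℕ, 3 ≤ n → ((17 : ℝ) / 10) ^ ((n - 2) ^ 2) ≤ (msapCount n n : ℝ)) ∧
    (17 : ℝ) / 10 ≤
      Filter.liminf (fun n : ℕ => (msapCount n n : ℝ) ^ ((1 : ℝ) / (n : ℝ) ^ 2)) atTop ∧
    (1 : ℝ) < (17 : ℝ) / 10 := by
  refine ⟨fun n hn => MSAP.msap_lower n hn, ?_, by norm_num⟩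
  set f : ℕ → ℝ := fun n => (msapCount n n : ℝ) ^ ((1 : ℝ) / (n : ℝ) ^ 2) with hf
  set l : ℕ → ℝ := fun n => ((17:ℝ)/10) ^ ((((n-2)^2 : ℕ) : ℝ) / (n:ℝ)^2) with hl
  have hnn : (0:ℝ) ≤ (17:ℝ)/10 := by norm_num
  have hle : ∀ᶠ n in atTop, l n ≤ f n := by
    filter_upwards [eventually_ge_atTop 3] with n hn
    have hb := MSAP.msap_lower n hn
    have hexp : (0:ℝ) ≤ 1 / (n:ℝ)^2 := by positivity
    calc l n = (((17:ℝ)/10) ^ ((n-2)^2 : ℕ)) ^ ((1:ℝ)/(n:ℝ)^2) := by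
          rw [hl]
          dsimp only
          rw [← Real.rpow_natCast ((17:ℝ)/10) ((n-2)^2), ← Real.rpow_mul hnn]
          congr 1
          ring
      _ ≤ (msapCount n n : ℝ) ^ ((1:ℝ)/(n:ℝ)^2) :=
          Real.rpow_le_rpow (by positivity) hb hexp
  have hub : ∀ᶠ n in atTop, f n ≤ 4 := by
    filter_upwards [eventually_ge_atTop 1] with n hn
    have hcount := MSAP.msapCount_le n hn
    have hn0 : (0:ℝ) < (n:ℝ) := by exact_mod_cast Nat.lt_of_lt_of_le Nat.zero_lt_one hn
    have hexp : (0:ℝ) ≤ 1 / (n:ℝ)^2 := by positivity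
    calc f n ≤ ((2^(2*n^2) : ℕ) : ℝ) ^ ((1:ℝ)/(n:ℝ)^2) := by
          apply Real.rpow_le_rpow (by positivity) _ hexp
          exact_mod_cast hcount
      _ = ((2:ℝ) ^ ((2*n^2 : ℕ) : ℝ)) ^ ((1:ℝ)/(n:ℝ)^2) := by
          congr 1
          rw [Nat.cast_pow, Nat.cast_ofNat, ← Real.rpow_natCast]
      _ = (2:ℝ) ^ (((2*n^2 : ℕ) : ℝ) * ((1:ℝ)/(n:ℝ)^2)) := by
          rw [← Real.rpow_mul (by norm_num)]
      _ = (2:ℝ) ^ (2:ℝ) := by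
          congr 1
          push_cast
          field_simp
      _ = 4 := by
          rw [show (2:ℝ) = ((2:ℕ):ℝ) by norm_num, Real.rpow_natCast]
          norm_num
  have hexp1 : Tendsto (fun n : ℕ => (((n-2)^2 : ℕ) : ℝ) / (n:ℝ)^2) atTop (𝓝 1) := by
    have heq : ∀ᶠ n : ℕ in atTop,
        (1 - 2/(n:ℝ))^2 = (((n-2)^2 : ℕ) : ℝ) / (n:ℝ)^2 := by
      filter_upwards [eventually_ge_atTop 2] with n hn
      have hn0 : (0:ℝ) < (n:ℝ) := by
        have : 0 < n := by omega
        exact_mod_cast this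
      rw [Nat.cast_pow, Nat.cast_sub (by omega)]
      field_simp <;> ring
    have h2 : Tendsto (fun n : ℕ => (1 - 2/(n:ℝ))^2) atTop (𝓝 1) := by
      have h3 : Tendsto (fun n : ℕ => 1 - 2/(n:ℝ)) atTop (𝓝 1) := by
        have h4 : Tendsto (fun n : ℕ => 2/(n:ℝ)) atTop (𝓝 0) :=
          tendsto_const_div_atTop_nhds_zero_nat 2
        simpa using (tendsto_const_nhds.sub h4)
      have := h3.pow 2
      simpa using this
    exact Tendsto.congr' heq h2
  have hten : Tendsto l atTop (𝓝 ((17:ℝ)/10)) := by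
    have : Tendsto l atTop (𝓝 (((17:ℝ)/10) ^ (1:ℝ))) := by
      apply Filter.Tendsto.rpow tendsto_const_nhds hexp1
      left; norm_num
    simpa [Real.rpow_one] using this
  have hbl : IsBoundedUnder (· ≥ ·) atTop l :=
    isBoundedUnder_of ⟨0, fun n => Real.rpow_nonneg (by norm_num) _⟩
  have hcb : IsCoboundedUnder (· ≥ ·) atTop f :=
    Filter.IsBoundedUnder.isCoboundedUnder_ge ⟨4, eventually_map.mpr hub⟩
  calc (17:ℝ)/10 = liminf l atTop := (hten.liminf_eq).symm
    _ ≤ liminf f atTop := liminf_le_liminf hle hbl hcb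

open Filter in
/-- p_{n×n} ≥ (17/10)^((n-2)²) for n ≥ 3, hence the liminf of (p_{n×n})^(1/n²)
is at least 17/10, which exceeds 1. -/
theorem msap_liminf_lower :
    (∀ n : ℕ, 3 ≤ n → ((17 : ℝ) / 10) ^ ((n - 2) ^ 2) ≤ (msapCount n n : ℝ)) ∧
    (17 : ℝ) / 10 ≤
      Filter.liminf (fun n : ℕ => (msapCount n n : ℝ) ^ ((1 : ℝ) / (n : ℝ) ^ 2)) atTop ∧
    (1 : ℝ) < (17 : ℝ) / 10 := by
  exact msap_liminf_aux
end
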